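/- arXiv:2011.07569 — 7 statements merged into one kernel-verified Lean document; each statement's English description precedes it below -/
import Mathlib

section
/- If M is an irreducible Metzler matrix (real square matrix with nonnegative off-diagonal entries) whose maximal real part of eigenvalues s(M) equals 0, then there exists a positive diagonal matrix P such that Mᵀ P + P M is negative semidefinite. -/
open Matrix

/-- The spectral abscissa: the largest real part among the (complex) eigenvalues. -/
noncomputable def spectralAbscissa {α : Type*} [Fintype α] [DecidableEq α]
    (M : Matrix α α ℝ) : ℝ :=
  sSup ((fun z : ℂ => z.re) '' spectrum ℂ (M.map Complex.ofReal))

/-- The spectral radius of a real matrix. -/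
noncomputable def specRad {α : Type*} [Fintype α] [DecidableEq α]
    (M : Matrix α α ℝ) : ℝ :=
  sSup ((fun z : ℂ => ‖z‖) '' spectrum ℂ (M.map Complex.ofReal))

/-- Irreducibility of a matrix: the directed graph on its nonzero entries is strongly
connected, phrased as: no nonempty proper subset of indices is closed. -/
def Irred {α : Type*} [Fintype α] [DecidableEq α] (M : Matrix α α ℝ) : Prop :=
  ∀ S : Finset α, S.Nonempty → S ≠ Finset.univ → ∃ i ∈ S, ∃ j, j ∉ S ∧ M i j ≠ 0

/-- A Metzler matrix: all off-diagonal entries are nonnegative. -/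
def Metzler {α : Type*} [Fintype α] [DecidableEq α] (M : Matrix α α ℝ) : Prop :=
  ∀ i j, i ≠ j → 0 ≤ M i j

lemma mem_spectrum_of_eig {n : ℕ} (A : Matrix (Fin n) (Fin n) ℂ) (μ : ℂ) (v : Fin n → ℂ)
    (hv : v ≠ 0) (h : A.mulVec v = μ • v) : μ ∈ spectrum ℂ A := by
  rw [← AlgEquiv.spectrum_eq (Matrix.toLinAlgEquiv' (R := ℂ) (n := Fin n)),
    ← Module.End.hasEigenvalue_iff_mem_spectrum]
  apply Module.End.hasEigenvalue_of_hasEigenvector (x := v)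
  refine ⟨Module.End.mem_eigenspace_iff.mpr ?_, hv⟩
  rw [Matrix.toLinAlgEquiv'_apply, h]

lemma spectrum_transpose {n : ℕ} (A : Matrix (Fin n) (Fin n) ℂ) :
    spectrum ℂ Aᵀ = spectrum ℂ A := by
  ext μ
  rw [spectrum.mem_iff, spectrum.mem_iff, not_iff_not, Matrix.isUnit_iff_isUnit_det,
    Matrix.isUnit_iff_isUnit_det]
  have h : (algebraMap ℂ (Matrix (Fin n) (Fin n) ℂ)) μ - Aᵀ = ((algebraMap ℂ _ μ) - A)ᵀ := by
    rw [Matrix.transpose_sub, Algebra.algebraMap_eq_smul_one,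
      Matrix.transpose_smul, Matrix.transpose_one]
  rw [h, Matrix.det_transpose]

lemma key {n : ℕ} (M : Matrix (Fin n) (Fin n) ℝ) (hMetz : Metzler M) (hirr : Irred M)
    (hs : spectralAbscissa M ≤ 0) :
    ∃ v : Fin n → ℝ, (∀ i, 0 < v i) ∧ ∀ i, M.mulVec v i ≤ 0 := by
  rcases Nat.eq_zero_or_pos n with hn | hn
  · subst hn
    exact ⟨fun _ => 1, fun i => i.elim0, fun i => i.elim0⟩
  have hne : Nonempty (Fin n) := Fin.pos_iff_nonempty.mp hn
  set c : ℝ := 1 + ∑ i, |M i i| with hc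
  set A : Matrix (Fin n) (Fin n) ℝ := M + c • 1 with hA
  have hAd : ∀ i j, A i j = M i j + if i = j then c else 0 := by
    intro i j
    by_cases h : i = j
    · subst h; simp [hA, Matrix.one_apply]
    · simp [hA, Matrix.one_apply, h]
  have hApos : ∀ i j, 0 ≤ A i j := by
    intro i j
    rw [hAd]
    by_cases h : i = j
    · subst h
      have h1 : |M i i| ≤ ∑ k, |M k k| :=
        Finset.single_le_sum (f := fun k => |M k k|) (fun k _ => abs_nonneg _)
          (Finset.mem_univ i)
      rw [if_pos rfl]
      have h2 := neg_abs_le (M i i)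
      simp only [hc]
      nlinarith
    · simpa [h] using hMetz i j h
  have hAM : ∀ i j, i ≠ j → A i j = M i j := by
    intro i j h; rw [hAd, if_neg h, add_zero]
  have hAmulnn : ∀ (x : Fin n → ℝ), (∀ i, 0 ≤ x i) → ∀ i, 0 ≤ A.mulVec x i := by
    intro x hx i
    simp only [Matrix.mulVec, dotProduct]
    exact Finset.sum_nonneg fun j _ => mul_nonneg (hApos i j) (hx j)
  -- upper bound
  set R0 : ℝ := ∑ i, ∑ j, A i j with hR0
  have hrow : ∀ i, ∑ j, A i j ≤ R0 :=
    fun i => Finset.single_le_sum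
      (fun k _ => Finset.sum_nonneg fun j _ => hApos k j) (Finset.mem_univ i)
  have hR0nn : 0 ≤ R0 := Finset.sum_nonneg fun i _ =>
    Finset.sum_nonneg fun j _ => hApos i j
  -- compact feasible set
  set S : Set (ℝ × (Fin n → ℝ)) :=
    {p | p.1 ∈ Set.Icc 0 R0 ∧ p.2 ∈ stdSimplex ℝ (Fin n) ∧ ∀ i, A.mulVec p.2 i ≤ p.1 * p.2 i}
    with hS
  have hSclosed : IsClosed S := by
    have h1 : S = (Set.Icc (0:ℝ) R0 ×ˢ stdSimplex ℝ (Fin n)) ∩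
        ⋂ i, {p : ℝ × (Fin n → ℝ) | A.mulVec p.2 i ≤ p.1 * p.2 i} := by
      ext p
      simp only [hS, Set.mem_setOf_eq, Set.mem_inter_iff, Set.mem_prod, Set.mem_iInter]
      tauto
    rw [h1]
    refine IsClosed.inter (isClosed_Icc.prod (isClosed_stdSimplex ℝ (Fin n)))
      (isClosed_iInter fun i => isClosed_le ?_ ?_)
    · simp only [Matrix.mulVec, dotProduct]
      exact continuous_finset_sum _ fun j _ =>
        continuous_const.mul ((continuous_apply j).comp continuous_snd)
    · exact continuous_fst.mul ((continuous_apply i).comp continuous_snd)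
  have hScompact : IsCompact S := by
    refine IsCompact.of_isClosed_subset
      ((isCompact_Icc (a := (0:ℝ)) (b := R0)).prod (isCompact_stdSimplex ℝ (Fin n))) hSclosed ?_
    exact fun p hp => ⟨hp.1, hp.2.1⟩
  have hnpos : (0:ℝ) < n := by exact_mod_cast hn
  have hSne : S.Nonempty := by
    refine ⟨(R0, fun _ => (n : ℝ)⁻¹), ⟨hR0nn, le_refl R0⟩, ⟨?_, ?_⟩, ?_⟩
    · intro i; positivity
    · simp [Finset.sum_const, Finset.card_univ]
      field_simp
    · intro i
      have h1 : A.mulVec (fun _ => (n:ℝ)⁻¹) i = (∑ j, A i j) * (n:ℝ)⁻¹ := by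
        simp only [Matrix.mulVec, dotProduct, Finset.sum_mul]
      rw [h1]
      exact mul_le_mul_of_nonneg_right (hrow i) (by positivity)
  obtain ⟨⟨r, v⟩, hmem, hmin⟩ := hScompact.exists_isMinOn hSne continuous_fst.continuousOn
  obtain ⟨hrIcc0, hvsimp0, hvineq0⟩ := hmem
  have hrIcc : r ∈ Set.Icc (0:ℝ) R0 := hrIcc0
  have hvsimp : v ∈ stdSimplex ℝ (Fin n) := hvsimp0
  have hvineq : ∀ i, A.mulVec v i ≤ r * v i := hvineq0
  have hvnn : ∀ i, 0 ≤ v i := hvsimp.1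
  have hvsum : ∑ i, v i = 1 := hvsimp.2
  -- positivity of the minimizing vector
  have hvpos : ∀ i, 0 < v i := by
    by_contra hcon
    push_neg at hcon
    obtain ⟨j0, hj0⟩ := hcon
    have hj0' : v j0 = 0 := le_antisymm hj0 (hvnn j0)
    set T : Finset (Fin n) := Finset.univ.filter (fun i => v i ≠ 0) with hT
    have hj0T : j0 ∉ T := by simp [hT, hj0']
    have hTne : T.Nonempty := by
      rcases Finset.eq_empty_or_nonempty T with h | h
      · exfalso
        have : ∑ i, v i = 0 := Finset.sum_eq_zero fun i _ => by
          by_contra hne'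
          have : i ∈ T := by simp [hT, hne']
          simp [h] at this
        rw [hvsum] at this; norm_num at this
      · exact h
    have hTcne : (Tᶜ : Finset (Fin n)).Nonempty := ⟨j0, Finset.mem_compl.mpr hj0T⟩
    have hTcnu : (Tᶜ : Finset (Fin n)) ≠ Finset.univ := by
      intro h
      obtain ⟨t, ht⟩ := hTne
      have : t ∈ (Tᶜ : Finset (Fin n)) := h ▸ Finset.mem_univ t
      exact (Finset.mem_compl.mp this) ht
    obtain ⟨p, hp, q, hq, hMpq⟩ := hirr Tᶜ hTcne hTcnu
    have hpT : v p = 0 := by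
      have := Finset.mem_compl.mp hp
      simp [hT] at this
      exact this
    have hqT : 0 < v q := by
      have hq' : q ∈ T := by
        by_contra h
        exact hq (Finset.mem_compl.mpr h)
      have : v q ≠ 0 := by simpa [hT] using hq'
      exact lt_of_le_of_ne (hvnn q) (Ne.symm this)
    have hpq' : p ≠ q := by
      rintro rfl
      exact hq hp
    have hApq : 0 < A p q := lt_of_le_of_ne (hApos p q) (by rw [hAM p q hpq']; exact Ne.symm hMpq)
    have h1 : A.mulVec v p ≤ 0 := by
      have := hvineq p
      rwa [hpT, mul_zero] at this
    have h3 : A.mulVec v p = 0 := le_antisymm h1 (hAmulnn v hvnn p)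
    have h4 : ∀ j ∈ Finset.univ, A p j * v j = 0 := by
      refine (Finset.sum_eq_zero_iff_of_nonneg fun j _ => mul_nonneg (hApos p j) (hvnn j)).mp ?_
      simpa only [Matrix.mulVec, dotProduct] using h3
    have := h4 q (Finset.mem_univ q)
    nlinarith
  -- the slack vanishes
  have hAveq : ∀ i, A.mulVec v i = r * v i := by
    by_contra hne'
    push_neg at hne'
    have hex : ∃ i, 0 < r * v i - A.mulVec v i := by
      obtain ⟨i, hi⟩ := hne'
      refine ⟨i, ?_⟩
      rcases lt_or_eq_of_le (hvineq i) with h | h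
      · linarith
      · exact absurd h hi
    clear hne'
    -- iterate to make the slack strictly positive everywhere
    have main : ∀ m : ℕ, ∃ vw : (Fin n → ℝ) × (Fin n → ℝ),
        (∀ i, 0 < vw.1 i) ∧ (∀ i, 0 ≤ vw.2 i) ∧
        (∀ i, A.mulVec vw.1 i + vw.2 i = r * vw.1 i) ∧
        min n (m + 1) ≤ (Finset.univ.filter (fun i => 0 < vw.2 i)).card := by
      intro m
      induction m with
      | zero =>
        refine ⟨(v, fun i => r * v i - A.mulVec v i), hvpos, fun i => sub_nonneg.mpr (hvineq i),
          fun i => by ring, ?_⟩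
        obtain ⟨i0, hi0⟩ := hex
        have hsub : ({i0} : Finset (Fin n)) ⊆ Finset.univ.filter (fun i => 0 < r * v i - A.mulVec v i) := by
          intro t ht
          simp only [Finset.mem_singleton] at ht
          subst ht
          simp only [Finset.mem_filter, Finset.mem_univ, true_and]
          linarith [hi0]
        have h1 : 1 ≤ (Finset.univ.filter (fun i => 0 < r * v i - A.mulVec v i)).card := by
          have := Finset.card_le_card hsub
          simpa using this
        exact le_trans (min_le_right n 1) h1
      | succ m ih =>
        obtain ⟨⟨vv, ww⟩, hv1, hw1, heq1, hcard1⟩ := ih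
        simp only at hv1 hw1 heq1 hcard1
        set T : Finset (Fin n) := Finset.univ.filter (fun i => 0 < ww i) with hT
        by_cases hfull : T = Finset.univ
        · refine ⟨(vv, ww), hv1, hw1, heq1, ?_⟩
          rw [← hT, hfull, Finset.card_univ, Fintype.card_fin]
          exact min_le_left n (m + 1 + 1)
        · have hTne : T.Nonempty := by
            rw [← Finset.card_pos]
            refine lt_of_lt_of_le ?_ hcard1
            omega
          have hTcard : T.card < n := by
            have h1 : T.card ≤ n := by
              have := Finset.card_le_card (Finset.subset_univ T)
              simpa using this
            rcases lt_or_eq_of_le h1 with h | h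
            · exact h
            · exfalso
              exact hfull (Finset.eq_univ_of_card T (by simpa using h))
          have hTcne : (Tᶜ : Finset (Fin n)).Nonempty := by
            rw [← Finset.card_pos, Finset.card_compl, Fintype.card_fin]
            omega
          have hTcnu : (Tᶜ : Finset (Fin n)) ≠ Finset.univ := by
            intro h
            obtain ⟨t, ht⟩ := hTne
            have : t ∈ (Tᶜ : Finset (Fin n)) := h ▸ Finset.mem_univ t
            exact (Finset.mem_compl.mp this) ht
          obtain ⟨p, hp, q, hq, hMpq⟩ := hirr Tᶜ hTcne hTcnu
          have hpT : p ∉ T := Finset.mem_compl.mp hp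
          have hqT : q ∈ T := by
            by_contra h
            exact hq (Finset.mem_compl.mpr h)
          have hwq : 0 < ww q := by simpa [hT] using hqT
          have hpq' : p ≠ q := fun h => hpT (h ▸ hqT)
          have hApq : 0 < A p q :=
            lt_of_le_of_ne (hApos p q) (by rw [hAM p q hpq']; exact Ne.symm hMpq)
          refine ⟨(vv + A.mulVec vv, ww + A.mulVec ww), ?_, ?_, ?_, ?_⟩
          · intro i
            have := hAmulnn vv (fun j => le_of_lt (hv1 j)) i
            have h2 := hv1 i
            simp only [Pi.add_apply]
            linarith
          · intro i
            have := hAmulnn ww hw1 i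
            have h2 := hw1 i
            simp only [Pi.add_apply]
            linarith
          · have hx : A.mulVec vv = r • vv - ww := by
              funext i
              have := heq1 i
              simp only [Pi.sub_apply, Pi.smul_apply, smul_eq_mul]
              linarith
            intro i
            rw [Matrix.mulVec_add]
            have h2 : A.mulVec (A.mulVec vv) = A.mulVec (r • vv - ww) := by rw [hx]
            rw [Matrix.mulVec_sub, Matrix.mulVec_smul] at h2
            have h3 := congrFun h2 i
            have h4 := congrFun hx i
            simp only [Pi.add_apply, Pi.sub_apply, Pi.smul_apply, smul_eq_mul] at h3 h4 ⊢
            rw [h3, h4]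
            ring
          · simp only
            have hmemf : ∀ x : Fin n, 0 < ww x + A.mulVec ww x →
                x ∈ Finset.univ.filter (fun i => 0 < (ww + A.mulVec ww) i) := by
              intro x hx
              simp only [Finset.mem_filter, Finset.mem_univ, Pi.add_apply, true_and]
              exact hx
            have hPp : 0 < ww p + A.mulVec ww p := by
              have hterm : A p q * ww q ≤ A.mulVec ww p := by
                have hh : A.mulVec ww p = ∑ j, A p j * ww j := by
                  simp only [Matrix.mulVec, dotProduct]
                rw [hh]
                exact Finset.single_le_sum (f := fun j => A p j * ww j)
                  (fun j _ => mul_nonneg (hApos p j) (hw1 j)) (Finset.mem_univ q)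
              nlinarith [hw1 p]
            have hsub : insert p T ⊆
                Finset.univ.filter (fun i => 0 < (ww + A.mulVec ww) i) := by
              intro t ht
              rcases Finset.mem_insert.mp ht with h | h
              · exact hmemf t (h ▸ hPp)
              · have h5 : 0 < ww t := by simpa [hT] using h
                have h6 := hAmulnn ww hw1 t
                exact hmemf t (by linarith)
            have hcard2 := Finset.card_le_card hsub
            rw [Finset.card_insert_of_notMem hpT] at hcard2
            have : min n (m + 1) = m + 1 := by omega
            rw [this] at hcard1
            omega
    obtain ⟨⟨vf, wf⟩, hvf, hwf, heqf, hcardf⟩ := main n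
    simp only at hvf hwf heqf hcardf
    have hwfpos : ∀ i, 0 < wf i := by
      have hfull : Finset.univ.filter (fun i => 0 < wf i) = Finset.univ := by
        apply Finset.eq_univ_of_card
        have h1 : (Finset.univ.filter (fun i => 0 < wf i)).card ≤ n := by
          have := Finset.card_le_card (Finset.subset_univ (Finset.univ.filter (fun i => 0 < wf i)))
          simpa using this
        have h2 : min n (n + 1) = n := by omega
        rw [h2] at hcardf
        rw [Fintype.card_fin]
        omega
      intro i
      rw [Finset.eq_univ_iff_forall] at hfull
      have := hfull i
      simpa using this
    -- build a strictly better feasible point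
    set ε : ℝ := Finset.univ.inf' (Finset.univ_nonempty) (fun i => wf i / vf i) with hε
    have hεpos : 0 < ε := by
      rw [hε]
      rw [Finset.lt_inf'_iff]
      intro i _
      exact div_pos (hwfpos i) (hvf i)
    have hεle : ∀ i, ε * vf i ≤ wf i := by
      intro i
      have h1 : ε ≤ wf i / vf i := Finset.inf'_le _ (Finset.mem_univ i)
      rw [div_eq_mul_inv] at h1
      have h2 := mul_le_mul_of_nonneg_right h1 (le_of_lt (hvf i))
      calc ε * vf i ≤ wf i * (vf i)⁻¹ * vf i := h2
        _ = wf i := by rw [mul_assoc, inv_mul_cancel₀ (ne_of_gt (hvf i)), mul_one]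
    have hAvf : ∀ i, A.mulVec vf i ≤ (r - ε) * vf i := by
      intro i
      have := heqf i
      have h2 := hεle i
      nlinarith
    have hrε : 0 ≤ r - ε := by
      by_contra h
      push_neg at h
      obtain ⟨i⟩ := hne
      have h1 := hAmulnn vf (fun j => le_of_lt (hvf j)) i
      have h2 := hAvf i
      nlinarith [hvf i]
    -- normalize
    have hsv : 0 < ∑ i, vf i := Finset.sum_pos (fun i _ => hvf i) Finset.univ_nonempty
    set s : ℝ := (∑ i, vf i)⁻¹ with hsdef
    have hspos : 0 < s := inv_pos.mpr hsv
    have hmem' : ((r - ε, fun i => s * vf i) : ℝ × (Fin n → ℝ)) ∈ S := by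
      refine ⟨⟨hrε, ?_⟩, ⟨?_, ?_⟩, ?_⟩
      · show r - ε ≤ R0
        have := hrIcc.2
        linarith
      · intro i
        exact le_of_lt (mul_pos hspos (hvf i))
      · show ∑ i, s * vf i = 1
        rw [← Finset.mul_sum, hsdef]
        field_simp
      · intro i
        show A.mulVec (fun j => s * vf j) i ≤ (r - ε) * (s * vf i)
        have h1 : A.mulVec (fun j => s * vf j) i = s * A.mulVec vf i := by
          simp only [Matrix.mulVec, dotProduct, Finset.mul_sum]
          exact Finset.sum_congr rfl fun j _ => by ring
        rw [h1]
        have h2 := hAvf i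
        nlinarith
    have h9 : r ≤ r - ε := hmin hmem'
    linarith
  -- r - c is a real eigenvalue of M
  have hMv : ∀ i, M.mulVec v i = (r - c) * v i := by
    intro i
    have h2 : A.mulVec v = M.mulVec v + c • v := by
      rw [hA, Matrix.add_mulVec, Matrix.smul_mulVec, Matrix.one_mulVec]
    have h3 := congrFun h2 i
    simp only [Pi.add_apply, Pi.smul_apply, smul_eq_mul] at h3
    have h4 := hAveq i
    linarith
  have hspec : ((r - c : ℝ) : ℂ) ∈ spectrum ℂ (M.map Complex.ofReal) := by
    apply mem_spectrum_of_eig _ _ (fun i => (v i : ℂ))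
    · obtain ⟨i⟩ := hne
      intro h
      have h5 := congrFun h i
      simp only [Pi.zero_apply, Complex.ofReal_eq_zero] at h5
      exact (ne_of_gt (hvpos i)) h5
    · funext i
      simp only [Matrix.mulVec, dotProduct, Matrix.map_apply, Pi.smul_apply, smul_eq_mul]
      have h1 : ∑ j, (Complex.ofReal (M i j)) * (v j : ℂ) = ((∑ j, M i j * v j : ℝ) : ℂ) := by
        push_cast
        rfl
      rw [h1]
      have h2 := hMv i
      simp only [Matrix.mulVec, dotProduct] at h2
      rw [h2]
      push_cast
      ring
  have hle : r - c ≤ spectralAbscissa M := by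
    have hmemim : (r - c : ℝ) ∈ (fun z : ℂ => z.re) '' spectrum ℂ (M.map Complex.ofReal) :=
      ⟨((r - c : ℝ) : ℂ), hspec, by simp⟩
    exact le_csSup (((M.map Complex.ofReal).finite_spectrum.image _).bddAbove) hmemim
  refine ⟨v, hvpos, fun i => ?_⟩
  rw [hMv i]
  have h6 : r - c ≤ 0 := le_trans hle hs
  nlinarith [hvnn i]
lemma Metzler.transpose' {n : ℕ} {M : Matrix (Fin n) (Fin n) ℝ} (hMetz : Metzler M) :
    Metzler Mᵀ := fun i j h => hMetz j i (Ne.symm h)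

lemma Irred.transpose' {n : ℕ} {M : Matrix (Fin n) (Fin n) ℝ} (hirr : Irred M) :
    Irred Mᵀ := by
  intro S hSne hSnu
  have hScne : (Sᶜ : Finset (Fin n)).Nonempty := by
    rw [← Finset.card_pos, Finset.card_compl]
    have h1 : S.card < Fintype.card (Fin n) := by
      rcases lt_or_eq_of_le (Finset.card_le_card (Finset.subset_univ S)) with h | h
      · simpa using h
      · exact absurd (Finset.eq_univ_of_card S (by simpa using h)) hSnu
    omega
  have hScnu : (Sᶜ : Finset (Fin n)) ≠ Finset.univ := by
    intro h
    obtain ⟨t, ht⟩ := hSne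
    exact (Finset.mem_compl.mp (h ▸ Finset.mem_univ t)) ht
  obtain ⟨i, hi, j, hj, hij⟩ := hirr Sᶜ hScne hScnu
  refine ⟨j, ?_, i, Finset.mem_compl.mp hi, hij⟩
  by_contra h
  exact hj (Finset.mem_compl.mpr h)

lemma spectralAbscissa_transpose' {n : ℕ} (M : Matrix (Fin n) (Fin n) ℝ) :
    spectralAbscissa Mᵀ = spectralAbscissa M := by
  unfold spectralAbscissa
  rw [Matrix.transpose_map, spectrum_transpose]

/-- If M is an irreducible Metzler matrix with spectral abscissa 0, there is a positive
diagonal matrix P with Mᵀ P + P M negative semidefinite. -/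
theorem metzler_lyapunov {n : ℕ} (M : Matrix (Fin n) (Fin n) ℝ)
    (hMetz : Metzler M) (hirr : Irred M) (hs : spectralAbscissa M = 0) :
    ∃ P : Fin n → ℝ, (∀ i, 0 < P i) ∧
      (-(Mᵀ * Matrix.diagonal P + Matrix.diagonal P * M)).PosSemidef := by
  obtain ⟨v, hvpos, hMv⟩ := key M hMetz hirr (le_of_eq hs)
  obtain ⟨u, hupos, hMu⟩ := key Mᵀ (Metzler.transpose' hMetz) (Irred.transpose' hirr)
    (by rw [spectralAbscissa_transpose']; exact le_of_eq hs)
  refine ⟨fun i => u i / v i, fun i => div_pos (hupos i) (hvpos i),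
    posSemidef_iff_dotProduct_mulVec.mpr ⟨?_, ?_⟩⟩
  · -- Hermitian
    ext i j
    simp only [conjTranspose_apply, Matrix.neg_apply, Matrix.add_apply, Matrix.mul_diagonal,
      Matrix.diagonal_mul, Matrix.transpose_apply, star_trivial]
    ring
  · intro x
    set P : Fin n → ℝ := fun i => u i / v i with hP
    set y : Fin n → ℝ := fun i => x i / v i with hy
    have hxy : ∀ i, x i = y i * v i := by
      intro i
      rw [hy]
      simp only []
      rw [div_mul_cancel₀ _ (ne_of_gt (hvpos i))]
    set F : ℝ := ∑ i, ∑ j, P i * M i j * x i * x j with hF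
    have hswap : ∑ i, ∑ j, M j i * P j * x i * x j = F := by
      rw [Finset.sum_comm, hF]
      exact Finset.sum_congr rfl fun j _ => Finset.sum_congr rfl fun i _ => by ring
    have hBF : F = ∑ i, ∑ j, u i * M i j * v j * y i * y j := by
      rw [hF]
      refine Finset.sum_congr rfl fun i _ => Finset.sum_congr rfl fun j _ => ?_
      rw [hxy i, hxy j, hP]
      have h1 := ne_of_gt (hvpos i)
      have h2 := ne_of_gt (hvpos j)
      field_simp
    have h2F : 2 * F = (∑ i, ∑ j, u i * M i j * v j * (y i)^2)
        + (∑ i, ∑ j, u i * M i j * v j * (y j)^2)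
        - ∑ i, ∑ j, u i * M i j * v j * (y i - y j)^2 := by
      rw [hBF]
      have e1 : (∑ i, ∑ j, u i * M i j * v j * (y i)^2)
          + (∑ i, ∑ j, u i * M i j * v j * (y j)^2)
          - (∑ i, ∑ j, u i * M i j * v j * (y i - y j)^2)
          = ∑ i, ∑ j, (u i * M i j * v j * (y i)^2 + u i * M i j * v j * (y j)^2
              - u i * M i j * v j * (y i - y j)^2) := by
        rw [← Finset.sum_add_distrib, ← Finset.sum_sub_distrib]
        refine Finset.sum_congr rfl fun i _ => ?_
        rw [← Finset.sum_add_distrib, ← Finset.sum_sub_distrib]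
      rw [e1, Finset.mul_sum]
      refine Finset.sum_congr rfl fun i _ => ?_
      rw [Finset.mul_sum]
      exact Finset.sum_congr rfl fun j _ => by ring
    have hS1 : ∑ i, ∑ j, u i * M i j * v j * (y i)^2 ≤ 0 := by
      apply Finset.sum_nonpos
      intro i _
      have h1 : ∑ j, u i * M i j * v j * (y i)^2 = (u i * (y i)^2) * M.mulVec v i := by
        simp only [Matrix.mulVec, dotProduct, Finset.mul_sum]
        exact Finset.sum_congr rfl fun j _ => by ring
      rw [h1]
      exact mul_nonpos_iff.mpr (Or.inl ⟨mul_nonneg (le_of_lt (hupos i)) (sq_nonneg _), hMv i⟩)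
    have hS2 : ∑ i, ∑ j, u i * M i j * v j * (y j)^2 ≤ 0 := by
      rw [Finset.sum_comm]
      apply Finset.sum_nonpos
      intro j _
      have h1 : ∑ i, u i * M i j * v j * (y j)^2 = (v j * (y j)^2) * Mᵀ.mulVec u j := by
        simp only [Matrix.mulVec, dotProduct, Matrix.transpose_apply, Finset.mul_sum]
        exact Finset.sum_congr rfl fun i _ => by ring
      rw [h1]
      exact mul_nonpos_iff.mpr (Or.inl ⟨mul_nonneg (le_of_lt (hvpos j)) (sq_nonneg _), hMu j⟩)
    have hS3 : 0 ≤ ∑ i, ∑ j, u i * M i j * v j * (y i - y j)^2 := by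
      refine Finset.sum_nonneg fun i _ => Finset.sum_nonneg fun j _ => ?_
      by_cases h : i = j
      · subst h; simp
      · exact mul_nonneg (mul_nonneg (mul_nonneg (le_of_lt (hupos i)) (hMetz i j h))
          (le_of_lt (hvpos j))) (sq_nonneg _)
    have hFle : F ≤ 0 := by linarith
    have hrw : star x ⬝ᵥ ((-(Mᵀ * Matrix.diagonal P + Matrix.diagonal P * M)) *ᵥ x)
        = -(F + F) := by
      have hstar : star x = x := funext fun i => star_trivial (x i)
      rw [hstar]
      have hlhs : x ⬝ᵥ ((-(Mᵀ * Matrix.diagonal P + Matrix.diagonal P * M)) *ᵥ x)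
          = ∑ i, ∑ j, (-(M j i * P j + P i * M i j)) * (x i * x j) := by
        simp only [dotProduct, Matrix.mulVec, Matrix.neg_apply, Matrix.add_apply,
          Matrix.mul_diagonal, Matrix.diagonal_mul, Matrix.transpose_apply, Finset.mul_sum]
        exact Finset.sum_congr rfl fun i _ => Finset.sum_congr rfl fun j _ => by ring
      rw [hlhs]
      calc ∑ i, ∑ j, (-(M j i * P j + P i * M i j)) * (x i * x j)
          = ∑ i, ∑ j, (-(M j i * P j * x i * x j) + -(P i * M i j * x i * x j)) :=
            Finset.sum_congr rfl fun i _ => Finset.sum_congr rfl fun j _ => by ring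
        _ = -(∑ i, ∑ j, M j i * P j * x i * x j) + -(∑ i, ∑ j, P i * M i j * x i * x j) := by
            rw [← Finset.sum_neg_distrib, ← Finset.sum_neg_distrib, ← Finset.sum_add_distrib]
            refine Finset.sum_congr rfl fun i _ => ?_
            rw [← Finset.sum_neg_distrib, ← Finset.sum_neg_distrib, ← Finset.sum_add_distrib]
        _ = -(F + F) := by rw [hswap, ← hF]; ring
    rw [hrw]
    linarith
end

section
/- If M is an irreducible Metzler matrix, then r = s(M) is a simple eigenvalue of M, and there exists a corresponding eigenvector all of whose entries are strictly positive. -/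
open Matrix

namespace PerronFrobeniusAux

open Finset Polynomial LinearMap Module Module.Free

lemma pow_entry_nonneg {n : ℕ} (A : Matrix (Fin n) (Fin n) ℝ) (hA : ∀ i j, 0 ≤ A i j) :
    ∀ k (i j : Fin n), 0 ≤ (((1 + A) ^ k : Matrix (Fin n) (Fin n) ℝ)) i j := by
  intro k
  induction k with
  | zero => intro i j; rw [pow_zero]; by_cases h : i = j <;> simp [Matrix.one_apply, h]
  | succ k ih =>
    intro i j
    rw [pow_succ, Matrix.mul_apply]
    refine Finset.sum_nonneg fun p _ => mul_nonneg (ih i p) ?_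
    by_cases h : p = j <;> simp [Matrix.add_apply, Matrix.one_apply, h, hA p j]
    linarith [hA j j]

lemma one_add_entry_nonneg {n : ℕ} (A : Matrix (Fin n) (Fin n) ℝ) (hA : ∀ i j, 0 ≤ A i j)
    (p q : Fin n) : 0 ≤ (1 + A) p q := by
  by_cases h : p = q <;> simp [Matrix.add_apply, Matrix.one_apply, h, hA p q]
  linarith [hA q q]

lemma pow_pos_of_irred {n : ℕ} (hn : 0 < n) (A : Matrix (Fin n) (Fin n) ℝ)
    (hA : ∀ i j, 0 ≤ A i j) (hirr : Irred A) (i j : Fin n) :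
    0 < (((1 + A) ^ (n - 1) : Matrix (Fin n) (Fin n) ℝ)) i j := by
  set S : ℕ → Finset (Fin n) :=
    fun k => Finset.univ.filter (fun j => 0 < (((1 + A) ^ k : Matrix (Fin n) (Fin n) ℝ)) i j)
    with hS
  have hmem : ∀ k (j : Fin n), j ∈ S k ↔ 0 < (((1 + A) ^ k : Matrix (Fin n) (Fin n) ℝ)) i j := by
    intro k j; simp [hS]
  have hmono : ∀ k, S k ⊆ S (k + 1) := by
    intro k p hp
    rw [hmem] at hp ⊢
    rw [pow_succ, Matrix.mul_apply]
    have h1 : ((1 + A) ^ k : Matrix (Fin n) (Fin n) ℝ) i p * (1 + A) p p ≤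
        ∑ q, ((1 + A) ^ k : Matrix (Fin n) (Fin n) ℝ) i q * (1 + A) q p :=
      Finset.single_le_sum
        (fun q _ => mul_nonneg (pow_entry_nonneg A hA k i q) (one_add_entry_nonneg A hA q p))
        (Finset.mem_univ p)
    have h2 : (0:ℝ) < ((1 + A) ^ k : Matrix (Fin n) (Fin n) ℝ) i p * (1 + A) p p := by
      apply mul_pos hp
      have := hA p p
      simp [Matrix.add_apply, Matrix.one_apply]
      linarith
    linarith
  have hgrow : ∀ k, S k ≠ Finset.univ → (S k).Nonempty → S k ⊂ S (k + 1) := by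
    intro k hne hnonempty
    obtain ⟨p, hp, q, hq, hApq⟩ := hirr (S k) hnonempty hne
    refine Finset.ssubset_iff_of_subset (hmono k) |>.mpr ⟨q, ?_, hq⟩
    rw [hmem, pow_succ, Matrix.mul_apply]
    have hApq' : 0 < (1 + A) p q := by
      have hpq : p ≠ q := fun h => hq (h ▸ hp)
      have := lt_of_le_of_ne (hA p q) (Ne.symm hApq)
      simp [Matrix.add_apply, Matrix.one_apply, hpq]
      linarith
    have h1 : ((1 + A) ^ k : Matrix (Fin n) (Fin n) ℝ) i p * (1 + A) p q ≤
        ∑ x, ((1 + A) ^ k : Matrix (Fin n) (Fin n) ℝ) i x * (1 + A) x q :=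
      Finset.single_le_sum
        (fun x _ => mul_nonneg (pow_entry_nonneg A hA k i x) (one_add_entry_nonneg A hA x q))
        (Finset.mem_univ p)
    have h2 : 0 < ((1 + A) ^ k : Matrix (Fin n) (Fin n) ℝ) i p * (1 + A) p q :=
      mul_pos ((hmem k p).mp hp) hApq'
    linarith
  have hbase : i ∈ S 0 := by rw [hmem]; simp [Matrix.one_apply]
  have hcard : ∀ k, S k = Finset.univ ∨ k + 1 ≤ (S k).card := by
    intro k
    induction k with
    | zero => exact Or.inr (Finset.card_pos.mpr ⟨i, hbase⟩)
    | succ k ih =>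
      by_cases hu : S (k+1) = Finset.univ
      · exact Or.inl hu
      right
      have hku : S k ≠ Finset.univ := fun h =>
        hu (Finset.univ_subset_iff.mp (h ▸ hmono k))
      rcases ih with h | h
      · exact absurd h hku
      have hne : (S k).Nonempty := Finset.card_pos.mp (by omega)
      have := Finset.card_lt_card (hgrow k hku hne)
      omega
  have hfin : S (n - 1) = Finset.univ := by
    rcases hcard (n - 1) with h | h
    · exact h
    · apply Finset.eq_univ_of_card
      have h2 := Finset.card_le_univ (S (n-1))
      simp only [Finset.card_univ, Fintype.card_fin] at *
      omega
  exact (hmem _ j).mp (hfin ▸ Finset.mem_univ j)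

lemma cw_max {n : ℕ} (hn : 0 < n) (A : Matrix (Fin n) (Fin n) ℝ)
    (hA : ∀ i j, 0 ≤ A i j) :
    ∃ r : ℝ, ∃ v : Fin n → ℝ, 0 ≤ r ∧ (∀ i, 0 ≤ v i) ∧ (∑ i, v i) = 1 ∧
      (∀ i, r * v i ≤ A.mulVec v i) ∧
      (∀ (t : ℝ) (u : Fin n → ℝ), (∀ i, 0 ≤ u i) → u ≠ 0 →
        (∀ i, t * u i ≤ A.mulVec u i) → t ≤ r) := by
  classical
  set C : ℝ := ∑ i, ∑ j, A i j with hC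
  have hC0 : 0 ≤ C := Finset.sum_nonneg fun i _ => Finset.sum_nonneg fun j _ => hA i j
  set D : Set (ℝ × (Fin n → ℝ)) :=
    {p | p.1 ∈ Set.Icc 0 C ∧ (∀ i, 0 ≤ p.2 i) ∧ (∑ i, p.2 i) = 1 ∧
      ∀ i, p.1 * p.2 i ≤ A.mulVec p.2 i} with hD
  -- the key bound: any admissible (t, u) with u in the simplex has t ≤ C
  have hbound : ∀ (t : ℝ) (u : Fin n → ℝ), (∀ i, 0 ≤ u i) → (∑ i, u i) = 1 →
      (∀ i, t * u i ≤ A.mulVec u i) → t ≤ C := by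
    intro t u hu hsum hineq
    have h1 : t = ∑ i, t * u i := by rw [← Finset.mul_sum, hsum, mul_one]
    have h2 : ∑ i, t * u i ≤ ∑ i, A.mulVec u i := Finset.sum_le_sum fun i _ => hineq i
    have h3 : ∑ i, A.mulVec u i ≤ C := by
      rw [hC]
      apply Finset.sum_le_sum
      intro i _
      rw [Matrix.mulVec, dotProduct]
      apply Finset.sum_le_sum
      intro j _
      have huj : u j ≤ 1 := by
        calc u j ≤ ∑ i, u i := Finset.single_le_sum (fun i _ => hu i) (Finset.mem_univ j)
        _ = 1 := hsum
      calc A i j * u j ≤ A i j * 1 := by nlinarith [hA i j, hu j]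
      _ = A i j := mul_one _
    linarith
  -- compactness of D
  have hDcomp : IsCompact D := by
    have hsub : D ⊆ Set.Icc 0 C ×ˢ Set.Icc (0 : Fin n → ℝ) 1 := by
      rintro ⟨t, u⟩ ⟨ht, hu, hsum, _⟩
      refine ⟨ht, fun i => hu i, fun i => ?_⟩
      calc u i ≤ ∑ k, u k := Finset.single_le_sum (fun k _ => hu k) (Finset.mem_univ i)
      _ = 1 := hsum
    have hcomp : IsCompact (Set.Icc (0:ℝ) C ×ˢ Set.Icc (0 : Fin n → ℝ) 1) :=
      isCompact_Icc.prod isCompact_Icc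
    apply hcomp.of_isClosed_subset _ hsub
    have h1 : IsClosed {p : ℝ × (Fin n → ℝ) | p.1 ∈ Set.Icc 0 C} :=
      isClosed_Icc.preimage continuous_fst
    have h2 : IsClosed {p : ℝ × (Fin n → ℝ) | ∀ i, 0 ≤ p.2 i} := by
      rw [Set.setOf_forall]
      exact isClosed_iInter fun i => isClosed_le continuous_const
        ((continuous_apply i).comp continuous_snd)
    have h3 : IsClosed {p : ℝ × (Fin n → ℝ) | (∑ i, p.2 i) = 1} :=
      isClosed_eq (continuous_finset_sum _ fun i _ => (continuous_apply i).comp continuous_snd) continuous_const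
    have h4 : IsClosed {p : ℝ × (Fin n → ℝ) | ∀ i, p.1 * p.2 i ≤ A.mulVec p.2 i} := by
      rw [Set.setOf_forall]
      refine isClosed_iInter fun i => isClosed_le ?_ ?_
      · exact continuous_fst.mul ((continuous_apply i).comp continuous_snd)
      · show Continuous fun p : ℝ × (Fin n → ℝ) => ∑ j, A i j * p.2 j
        exact continuous_finset_sum _ fun j _ =>
          continuous_const.mul ((continuous_apply j).comp continuous_snd)
    have : D = _ ∩ (_ ∩ (_ ∩ _)) := rfl
    rw [this]
    exact h1.inter (h2.inter (h3.inter h4))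
  -- D is nonempty
  have hDne : D.Nonempty := by
    refine ⟨(0, fun _ => (n : ℝ)⁻¹), ⟨le_refl 0, hC0⟩, fun i => by positivity, ?_, fun i => ?_⟩
    · simp [Finset.sum_const]
      field_simp
    · simp only [zero_mul, Matrix.mulVec, dotProduct]
      exact Finset.sum_nonneg fun j _ => mul_nonneg (hA i j) (by positivity)
  obtain ⟨⟨r, v⟩, hmemD, hmax⟩ := hDcomp.exists_isMaxOn hDne continuous_fst.continuousOn
  obtain ⟨hrIcc, hv0, hvsum, hineq⟩ := hmemD
  refine ⟨r, v, hrIcc.1, hv0, hvsum, hineq, ?_⟩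
  intro t u hu hune hineq'
  rcases le_or_gt t 0 with ht | ht
  · linarith [hrIcc.1]
  -- normalize u
  have hσpos : 0 < ∑ i, u i := by
    rcases Function.ne_iff.mp hune with ⟨i, hi⟩
    have : 0 < u i := lt_of_le_of_ne (hu i) (Ne.symm hi)
    calc (0:ℝ) < u i := this
    _ ≤ ∑ k, u k := Finset.single_le_sum (fun k _ => hu k) (Finset.mem_univ i)
  set σ := ∑ i, u i
  set u' : Fin n → ℝ := fun i => σ⁻¹ * u i with hu'
  have hu'0 : ∀ i, 0 ≤ u' i := fun i => mul_nonneg (by positivity) (hu i)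
  have hu'sum : (∑ i, u' i) = 1 := by
    rw [hu']; rw [← Finset.mul_sum]
    field_simp
    rfl
  have hu'ineq : ∀ i, t * u' i ≤ A.mulVec u' i := by
    intro i
    have : A.mulVec u' i = σ⁻¹ * A.mulVec u i := by
      simp only [hu', Matrix.mulVec, dotProduct, Finset.mul_sum]
      exact Finset.sum_congr rfl fun j _ => by ring
    rw [this]
    have := hineq' i
    have hσinv : 0 ≤ σ⁻¹ := by positivity
    calc t * u' i = σ⁻¹ * (t * u i) := by rw [hu']; ring
    _ ≤ σ⁻¹ * A.mulVec u i := by nlinarith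
  have htmem : (t, u') ∈ D :=
    ⟨⟨le_of_lt ht, hbound t u' hu'0 hu'sum hu'ineq⟩, hu'0, hu'sum, hu'ineq⟩
  exact hmax htmem

lemma mulVec_pos {n : ℕ} {B : Matrix (Fin n) (Fin n) ℝ} (hB : ∀ i j, 0 < B i j)
    {y : Fin n → ℝ} (hy : ∀ i, 0 ≤ y i) (hyne : y ≠ 0) (i : Fin n) :
    0 < B.mulVec y i := by
  obtain ⟨j0, hj0⟩ := Function.ne_iff.mp hyne
  have hyj0 : 0 < y j0 := lt_of_le_of_ne (hy j0) (Ne.symm hj0)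
  rw [Matrix.mulVec, dotProduct]
  calc (0:ℝ) < B i j0 * y j0 := mul_pos (hB i j0) hyj0
  _ ≤ ∑ j, B i j * y j :=
      Finset.single_le_sum (fun j _ => mul_nonneg (hB i j).le (hy j)) (Finset.mem_univ j0)

lemma pow_one_add_mulVec {n : ℕ} (A : Matrix (Fin n) (Fin n) ℝ) {r : ℝ} {v : Fin n → ℝ}
    (h : A.mulVec v = r • v) (k : ℕ) :
    ((1 + A) ^ k : Matrix (Fin n) (Fin n) ℝ).mulVec v = (1 + r) ^ k • v := by
  induction k with
  | zero => simp
  | succ k ih =>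
    rw [pow_succ', ← Matrix.mulVec_mulVec, ih, Matrix.mulVec_smul, Matrix.add_mulVec,
      Matrix.one_mulVec, h, pow_succ']
    ext i
    simp [Pi.smul_apply]
    ring

lemma perron_pair {n : ℕ} (hn : 0 < n) (A : Matrix (Fin n) (Fin n) ℝ)
    (hA : ∀ i j, 0 ≤ A i j) (hirr : Irred A) :
    ∃ r : ℝ, ∃ v : Fin n → ℝ, 0 ≤ r ∧ (∀ i, 0 < v i) ∧ A.mulVec v = r • v ∧
      (∀ (t : ℝ) (u : Fin n → ℝ), (∀ i, 0 ≤ u i) → u ≠ 0 →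
        (∀ i, t * u i ≤ A.mulVec u i) → t ≤ r) := by
  classical
  obtain ⟨r, v, hr0, hv0, hvsum, hineq, hCW⟩ := cw_max hn A hA
  set B : Matrix (Fin n) (Fin n) ℝ := (1 + A) ^ (n - 1) with hBdef
  have hB : ∀ i j, 0 < B i j := pow_pos_of_irred hn A hA hirr
  have hvne : v ≠ 0 := by
    intro h
    rw [h] at hvsum
    simp at hvsum
  have hcomm : B * A = A * B :=
    (((Commute.one_left A).add_left (Commute.refl A)).pow_left (n - 1))
  -- eigen equality
  have heig : A.mulVec v = r • v := by
    by_contra hne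
    set w : Fin n → ℝ := A.mulVec v - r • v with hw
    have hw0 : ∀ i, 0 ≤ w i := fun i => by
      simp [hw, Pi.sub_apply, Pi.smul_apply]
      exact hineq i
    have hwne : w ≠ 0 := fun h => hne (sub_eq_zero.mp h)
    set u : Fin n → ℝ := B.mulVec v with hu
    have hupos : ∀ i, 0 < u i := mulVec_pos hB hv0 hvne
    have hBw : ∀ i, 0 < B.mulVec w i := mulVec_pos hB hw0 hwne
    have hkey : A.mulVec u = r • u + B.mulVec w := by
      rw [hu, Matrix.mulVec_mulVec, ← hcomm, ← Matrix.mulVec_mulVec,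
        show A.mulVec v = w + r • v by rw [hw]; abel,
        Matrix.mulVec_add, Matrix.mulVec_smul]
      abel
    set ε : ℝ := Finset.univ.inf' (by have : Nonempty (Fin n) := ⟨⟨0, hn⟩⟩; exact Finset.univ_nonempty) (fun i => B.mulVec w i / u i) with hε
    have hεpos : 0 < ε := by
      rw [hε]
      apply Finset.lt_inf'_iff _ |>.mpr
      intro i _
      exact div_pos (hBw i) (hupos i)
    have hεle : ∀ i, ε ≤ B.mulVec w i / u i := fun i =>
      Finset.inf'_le _ (Finset.mem_univ i)
    have hineq2 : ∀ i, (r + ε) * u i ≤ A.mulVec u i := by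
      intro i
      have h1 : ε * u i ≤ B.mulVec w i := by
        have := hεle i
        rw [le_div_iff₀ (hupos i)] at this
        linarith
      have := congrFun hkey i
      simp only [Pi.add_apply, Pi.smul_apply, smul_eq_mul] at this
      rw [this]
      nlinarith
    have hune : u ≠ 0 := fun h => by
      have := hupos ⟨0, hn⟩
      rw [h] at this
      simp at this
    have := hCW (r + ε) u (fun i => (hupos i).le) hune hineq2
    linarith
  -- positivity of v
  have hvpos : ∀ i, 0 < v i := by
    intro i
    have h1 : B.mulVec v = (1 + r) ^ (n - 1) • v := pow_one_add_mulVec A heig (n - 1)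
    have h2 : 0 < B.mulVec v i := mulVec_pos hB hv0 hvne i
    rw [h1] at h2
    simp only [Pi.smul_apply, smul_eq_mul] at h2
    nlinarith [pow_pos (show (0:ℝ) < 1 + r by linarith) (n - 1)]
  exact ⟨r, v, hr0, hvpos, heig, hCW⟩

lemma mem_spectrum_iff' {m : Type*} [Fintype m] [DecidableEq m] (N : Matrix m m ℂ) (μ : ℂ) :
    μ ∈ spectrum ℂ N ↔ ∃ x : m → ℂ, x ≠ 0 ∧ N.mulVec x = μ • x := by
  rw [spectrum.mem_iff]
  have halg : (algebraMap ℂ (Matrix m m ℂ)) μ - N = Matrix.diagonal (fun _ => μ) - N := by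
    rw [Matrix.algebraMap_eq_diagonal]; rfl
  rw [halg, Matrix.isUnit_iff_isUnit_det, isUnit_iff_ne_zero, not_not,
    ← Matrix.exists_mulVec_eq_zero_iff]
  have hdiag : ∀ x : m → ℂ, Matrix.mulVec (Matrix.diagonal fun _ => μ) x = μ • x := by
    intro x; ext i; simp [Matrix.mulVec_diagonal]
  constructor
  · rintro ⟨x, hx0, hx⟩
    refine ⟨x, hx0, ?_⟩
    rw [Matrix.sub_mulVec, hdiag] at hx
    linear_combination (norm := module) -hx
  · rintro ⟨x, hx0, hx⟩
    exact ⟨x, hx0, by rw [Matrix.sub_mulVec, hdiag, hx]; abel⟩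

theorem perron_core {n : ℕ} (hn : 0 < n) (M : Matrix (Fin n) (Fin n) ℝ)
    (hMetz : Metzler M) (hirr : Irred M) :
    ∃ v : Fin n → ℝ, (∀ i, 0 < v i) ∧ M.mulVec v = spectralAbscissa M • v ∧
      (∀ x : Fin n → ℝ, M.mulVec x = spectralAbscissa M • x → ∃ t : ℝ, x = t • v) := by
  classical
  have hne : Nonempty (Fin n) := ⟨⟨0, hn⟩⟩
  set c : ℝ := ∑ i, |M i i| with hc
  set A : Matrix (Fin n) (Fin n) ℝ := M + c • (1 : Matrix (Fin n) (Fin n) ℝ) with hAdef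
  have hAentry : ∀ i j, A i j = M i j + if i = j then c else 0 := by
    intro i j
    by_cases h : i = j <;> simp [hAdef, Matrix.add_apply, Matrix.smul_apply, Matrix.one_apply, h]
  have hA : ∀ i j, 0 ≤ A i j := by
    intro i j
    rw [hAentry]
    by_cases h : i = j
    · have h1 : |M i i| ≤ c :=
        Finset.single_le_sum (fun k (_ : k ∈ Finset.univ) => abs_nonneg (M k k))
          (Finset.mem_univ i)
      simp [h]
      cases abs_cases (M j j) with
      | inl hh => subst h; linarith [hh.1]
      | inr hh => subst h; linarith [hh.1]
    · simp [h]; exact hMetz i j h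
  have hirrA : Irred A := by
    intro S hS1 hS2
    obtain ⟨i, hi, j, hj, hij⟩ := hirr S hS1 hS2
    refine ⟨i, hi, j, hj, ?_⟩
    have : i ≠ j := fun h => hj (h ▸ hi)
    rw [hAentry]
    simp [this]
    exact hij
  have hAmul : ∀ x : Fin n → ℝ, A.mulVec x = M.mulVec x + c • x := by
    intro x
    rw [hAdef, Matrix.add_mulVec, Matrix.smul_mulVec, Matrix.one_mulVec]
  obtain ⟨r, v, hr0, hvpos, heig, hCW⟩ := perron_pair hn A hA hirrA
  have hMv : M.mulVec v = (r - c) • v := by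
    have := hAmul v
    rw [heig] at this
    ext i
    have := congrFun this i
    simp only [Pi.add_apply, Pi.smul_apply, smul_eq_mul] at *
    linarith
  -- spectrum membership of r - c
  have hmemspec : ((r - c : ℝ) : ℂ) ∈ spectrum ℂ (M.map Complex.ofReal) := by
    rw [mem_spectrum_iff']
    refine ⟨fun i => (v i : ℂ), ?_, ?_⟩
    · intro h
      have := congrFun h ⟨0, hn⟩
      simp only [Pi.zero_apply, Complex.ofReal_eq_zero] at this
      exact (hvpos ⟨0, hn⟩).ne' this
    · ext i
      rw [Matrix.mulVec, dotProduct]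
      have : ∀ j, (M.map Complex.ofReal) i j * (v j : ℂ) = ((M i j * v j : ℝ) : ℂ) := by
        intro j; simp [Matrix.map_apply]
      rw [Finset.sum_congr rfl (fun j _ => this j), ← Complex.ofReal_sum]
      have := congrFun hMv i
      simp only [Pi.smul_apply, smul_eq_mul] at this ⊢
      rw [show ∑ j, M i j * v j = M.mulVec v i from rfl, this]
      push_cast
      ring
  -- upper bound for all spectrum elements
  have hub : ∀ μ ∈ spectrum ℂ (M.map Complex.ofReal), μ.re ≤ r - c := by
    intro μ hμ
    rw [mem_spectrum_iff'] at hμ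
    obtain ⟨x, hx0, hx⟩ := hμ
    set u : Fin n → ℝ := fun i => ‖x i‖ with hu
    have hu0 : ∀ i, 0 ≤ u i := fun i => norm_nonneg _
    have hune : u ≠ 0 := by
      obtain ⟨i, hi⟩ := Function.ne_iff.mp hx0
      intro h
      have := congrFun h i
      simp only [hu, Pi.zero_apply, norm_eq_zero] at this
      exact hi this
    have hAx : ∀ i, (μ + c) * x i = ∑ j, ((A i j : ℝ) : ℂ) * x j := by
      intro i
      have h1 := congrFun hx i
      rw [Matrix.mulVec, dotProduct] at h1
      simp only [Pi.smul_apply, smul_eq_mul] at h1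
      have : ∀ j, ((A i j : ℝ) : ℂ) * x j =
          (M.map Complex.ofReal) i j * x j + (if i = j then (c:ℂ) else 0) * x j := by
        intro j
        rw [hAentry]
        push_cast
        split <;> · simp [Matrix.map_apply]; try ring
      rw [Finset.sum_congr rfl (fun j _ => this j), Finset.sum_add_distrib, h1]
      simp [Finset.sum_ite_eq, mul_comm]
      ring
    have hineq : ∀ i, ‖μ + c‖ * u i ≤ A.mulVec u i := by
      intro i
      rw [hu]
      calc ‖μ + c‖ * ‖x i‖ = ‖(μ + c) * x i‖ := by
            rw [norm_mul]
      _ = ‖∑ j, ((A i j : ℝ) : ℂ) * x j‖ := by rw [hAx i]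
      _ ≤ ∑ j, ‖((A i j : ℝ) : ℂ) * x j‖ := norm_sum_le _ _
      _ = ∑ j, A i j * ‖x j‖ := by
            apply Finset.sum_congr rfl
            intro j _
            rw [norm_mul, Complex.norm_real, Real.norm_eq_abs, abs_of_nonneg (hA i j)]
      _ = A.mulVec u i := rfl
    have ht := hCW (‖μ + c‖) u hu0 hune hineq
    have : μ.re + c ≤ ‖μ + c‖ := by
      have := Complex.re_le_norm (μ + c)
      simpa using this
    linarith
  -- spectralAbscissa = r - c
  have hsa : spectralAbscissa M = r - c := by
    apply le_antisymm
    · apply csSup_le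
      · exact ⟨r - c, ⟨_, hmemspec, by simp⟩⟩
      · rintro y ⟨μ, hμ, rfl⟩
        exact hub μ hμ
    · apply le_csSup
      · refine ⟨r - c, ?_⟩
        rintro y ⟨μ, hμ, rfl⟩
        exact hub μ hμ
      · exact ⟨_, hmemspec, by simp⟩
  -- geometric simplicity
  refine ⟨v, hvpos, by rw [hsa]; exact hMv, ?_⟩
  intro x hx
  rw [hsa] at hx
  -- x is a real eigenvector of A for r
  have hAx : A.mulVec x = r • x := by
    rw [hAmul, hx]
    ext i
    simp only [Pi.add_apply, Pi.smul_apply, smul_eq_mul]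
    ring
  set t : ℝ := Finset.univ.inf' Finset.univ_nonempty (fun i => x i / v i) with htdef
  obtain ⟨i0, -, hi0⟩ := Finset.exists_mem_eq_inf' (Finset.univ_nonempty) (fun i => x i / v i)
  set y : Fin n → ℝ := x - t • v with hy
  have hy0 : ∀ i, 0 ≤ y i := by
    intro i
    have h1 : t ≤ x i / v i := htdef ▸ Finset.inf'_le _ (Finset.mem_univ i)
    rw [le_div_iff₀ (hvpos i)] at h1
    simp [hy, Pi.sub_apply, Pi.smul_apply]
    linarith
  have hyi0 : y i0 = 0 := by
    have : t = x i0 / v i0 := htdef ▸ hi0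
    simp only [hy, Pi.sub_apply, Pi.smul_apply, smul_eq_mul, this]
    rw [div_mul_cancel₀ _ (hvpos i0).ne', sub_self]
  have hAy : A.mulVec y = r • y := by
    rw [hy, Matrix.mulVec_sub, Matrix.mulVec_smul, hAx, heig]
    ext i
    simp only [Pi.sub_apply, Pi.smul_apply, smul_eq_mul]
    ring
  have hyzero : y = 0 := by
    by_contra hyne
    have hB := pow_pos_of_irred hn A hA hirrA
    have h1 : ((1 + A) ^ (n-1) : Matrix (Fin n) (Fin n) ℝ).mulVec y = (1 + r) ^ (n-1) • y :=
      pow_one_add_mulVec A hAy (n-1)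
    have h2 : 0 < ((1 + A) ^ (n-1) : Matrix (Fin n) (Fin n) ℝ).mulVec y i0 :=
      mulVec_pos hB hy0 hyne i0
    rw [h1] at h2
    simp only [Pi.smul_apply, smul_eq_mul, hyi0, mul_zero] at h2
    exact lt_irrefl 0 h2
  refine ⟨t, ?_⟩
  have := sub_eq_zero.mp (hy ▸ hyzero)
  exact this

lemma eval_charpoly_det {m : Type*} [Fintype m] [DecidableEq m] (M : Matrix m m ℝ) (x : ℝ) :
    M.charpoly.eval x = (Matrix.diagonal (fun _ => x) - M).det := by
  rw [Matrix.charpoly, ← Polynomial.coe_evalRingHom, RingHom.map_det]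
  congr 1
  ext i j
  by_cases h : i = j <;>
    simp [h, Matrix.charmatrix_apply, Matrix.diagonal_apply, Matrix.one_apply]

set_option maxHeartbeats 1000000 in
lemma simple_root {n : ℕ} (hn : 0 < n) (M : Matrix (Fin n) (Fin n) ℝ) (s : ℝ)
    (v w : Fin n → ℝ) (hv : ∀ i, 0 < v i) (hw : ∀ i, 0 < w i)
    (hMv : M.mulVec v = s • v) (hMw : Mᵀ.mulVec w = s • w)
    (hgeo : ∀ x : Fin n → ℝ, M.mulVec x = s • x → ∃ t : ℝ, x = t • v) :
    Polynomial.rootMultiplicity s M.charpoly = 1 := by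
  classical
  set φ : Module.End ℝ (Fin n → ℝ) := Matrix.toLin' M with hφ
  have hφ_apply : ∀ x, φ x = M.mulVec x := fun x => Matrix.toLin'_apply M x
  -- linear functional given by w
  set g : (Fin n → ℝ) →ₗ[ℝ] ℝ :=
    { toFun := fun x => ∑ i, w i * x i
      map_add' := by intro a b; simp [mul_add, Finset.sum_add_distrib]
      map_smul' := by
        intro c a
        simp only [Pi.smul_apply, smul_eq_mul, RingHom.id_apply, Finset.mul_sum]
        exact Finset.sum_congr rfl fun i _ => by ring } with hg
  have hg_apply : ∀ x, g x = ∑ i, w i * x i := fun _ => rfl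
  have hgφ : ∀ x, g (φ x) = s * g x := by
    intro x
    rw [hg_apply, hg_apply, hφ_apply]
    have h1 : ∀ i, w i * M.mulVec x i = ∑ j, w i * (M i j * x j) := by
      intro i
      rw [Matrix.mulVec, dotProduct, Finset.mul_sum]
    rw [Finset.sum_congr rfl fun i _ => h1 i, Finset.sum_comm]
    have h2 : ∀ j, ∑ i, w i * (M i j * x j) = Mᵀ.mulVec w j * x j := by
      intro j
      rw [Matrix.mulVec, dotProduct, Finset.sum_mul]
      exact Finset.sum_congr rfl fun i _ => by simp [Matrix.transpose_apply]; ring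
    rw [Finset.sum_congr rfl fun j _ => h2 j, Finset.mul_sum]
    apply Finset.sum_congr rfl
    intro j _
    rw [hMw]
    simp only [Pi.smul_apply, smul_eq_mul]
    ring
  have hvne : v ≠ 0 := fun h => (hv ⟨0, hn⟩).ne' (congrFun h ⟨0, hn⟩)
  have hgv : 0 < g v := by
    rw [hg_apply]
    have : Nonempty (Fin n) := ⟨⟨0, hn⟩⟩
    exact Finset.sum_pos (fun i _ => mul_pos (hw i) (hv i)) Finset.univ_nonempty
  set V : Submodule ℝ (Fin n → ℝ) := Submodule.span ℝ {v} with hV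
  set W : Submodule ℝ (Fin n → ℝ) := LinearMap.ker g with hW
  have hVW : IsCompl V W := by
    constructor
    · rw [disjoint_iff]
      ext x
      simp only [Submodule.mem_bot, Submodule.mem_inf]
      constructor
      · rintro ⟨hx1, hx2⟩
        obtain ⟨a, rfl⟩ := Submodule.mem_span_singleton.mp hx1
        have : g (a • v) = 0 := hx2
        rw [_root_.map_smul] at this
        simp only [smul_eq_mul] at this
        have ha : a = 0 := by
          rcases mul_eq_zero.mp this with h | h
          · exact h
          · exact absurd h hgv.ne'
        rw [ha, zero_smul]
      · rintro rfl
        exact ⟨Submodule.zero_mem V, Submodule.zero_mem W⟩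
    · rw [codisjoint_iff, eq_top_iff]
      intro x _
      have : x = (g x / g v) • v + (x - (g x / g v) • v) := by abel
      rw [this]
      apply Submodule.add_mem_sup
      · exact Submodule.smul_mem _ _ (Submodule.mem_span_singleton_self v)
      · show g _ = 0
        rw [_root_.map_sub, _root_.map_smul]
        simp only [smul_eq_mul]
        field_simp
        ring
  have hφV : ∀ x ∈ V, φ x ∈ V := by
    intro x hx
    obtain ⟨a, rfl⟩ := Submodule.mem_span_singleton.mp hx
    rw [_root_.map_smul, hφ_apply, hMv]
    exact Submodule.smul_mem _ _ (Submodule.smul_mem _ _ (Submodule.mem_span_singleton_self v))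
  have hφW : ∀ x ∈ W, φ x ∈ W := by
    intro x hx
    show g (φ x) = 0
    rw [hgφ]
    have : g x = 0 := hx
    rw [this, mul_zero]
  set F := φ.restrict hφV with hF
  set G := φ.restrict hφW with hG
  set e := Submodule.prodEquivOfIsCompl V W hVW with he
  have hψ : F.prodMap G = e.symm.conj φ := by
    apply ((chooseBasis ℝ V).prod (chooseBasis ℝ W)).ext
    simp only [Basis.prod_apply, coe_inl, coe_inr, prodMap_apply, LinearEquiv.conj_apply,
      LinearEquiv.symm_symm, Submodule.coe_prodEquivOfIsCompl, coe_comp, LinearEquiv.coe_coe,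
      Function.comp_apply, coprod_apply, Submodule.coe_subtype, map_add, Sum.forall, Sum.elim_inl,
      map_zero, ZeroMemClass.coe_zero, add_zero, LinearEquiv.eq_symm_apply, and_self,
      Submodule.coe_prodEquivOfIsCompl', restrict_coe_apply, implies_true, Sum.elim_inr, zero_add,
      e, F, G]
  -- charpoly factorization
  have hchar : M.charpoly = F.charpoly * G.charpoly := by
    have h1 : M.charpoly = φ.charpoly := by
      rw [← LinearMap.charpoly_toMatrix φ (Pi.basisFun ℝ (Fin n))]
      congr 1
      rw [LinearMap.toMatrix_eq_toMatrix', hφ]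
      exact (LinearMap.toMatrix'_toLin' M).symm
    rw [h1, ← e.symm.charpoly_conj φ, ← hψ, LinearMap.charpoly_prodMap]
  -- charpoly of F is X - C s
  have hFs : ∀ x : V, F x = s • x := by
    intro x
    obtain ⟨a, ha⟩ := Submodule.mem_span_singleton.mp x.2
    apply Subtype.ext
    rw [LinearMap.restrict_coe_apply]
    show φ x.1 = ((s • x : V) : Fin n → ℝ)
    rw [SetLike.val_smul, hφ_apply, ← ha, Matrix.mulVec_smul, hMv, smul_comm]
  have hFchar : F.charpoly = X - C s := by
    have hrank : Module.finrank ℝ V = 1 := finrank_span_singleton hvne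
    let bV : Basis (Fin 1) ℝ V := Module.finBasisOfFinrankEq ℝ V hrank
    rw [← LinearMap.charpoly_toMatrix F bV]
    have hmat : LinearMap.toMatrix bV bV F = Matrix.diagonal (fun _ => s) := by
      ext i j
      rw [LinearMap.toMatrix_apply, hFs, _root_.map_smul]
      simp [Matrix.diagonal_apply, Finsupp.single_apply, Subsingleton.elim j i]
    rw [hmat, Matrix.charpoly_of_upperTriangular _ (Matrix.blockTriangular_diagonal _)]
    simp
  -- s is not a root of charpoly G
  have hGroot : ¬ (G.charpoly).IsRoot s := by
    intro hroot
    set bW := chooseBasis ℝ W with hbW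
    rw [← LinearMap.charpoly_toMatrix G bW, Polynomial.IsRoot, eval_charpoly_det] at hroot
    obtain ⟨y, hy0, hy⟩ := (Matrix.exists_mulVec_eq_zero_iff).mpr hroot
    have hNG : (LinearMap.toMatrix bW bW G).mulVec y = s • y := by
      rw [Matrix.sub_mulVec] at hy
      have hd : Matrix.mulVec (Matrix.diagonal fun _ => s) y = s • y := by
        ext i; simp [Matrix.mulVec_diagonal]
      rw [hd] at hy
      linear_combination (norm := module) -hy
    set z : W := bW.equivFun.symm y with hz
    have hyz : ⇑(bW.repr z) = y := by
      have h6 : bW.equivFun z = y := bW.equivFun.apply_symm_apply y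
      funext i
      rw [← Basis.equivFun_apply, h6]
    have hzy : G z = s • z := by
      apply bW.repr.injective
      apply DFunLike.coe_injective
      calc ⇑(bW.repr (G z)) = (LinearMap.toMatrix bW bW G).mulVec ⇑(bW.repr z) :=
            (LinearMap.toMatrix_mulVec_repr bW bW G z).symm
      _ = (LinearMap.toMatrix bW bW G).mulVec y := by rw [hyz]
      _ = s • y := hNG
      _ = ⇑(bW.repr (s • z)) := by rw [_root_.map_smul]; funext i; simp [← hyz]
    have hzne : z ≠ 0 := by
      intro h
      apply hy0
      rw [← hyz, h]
      simp
    -- z.1 is an eigenvector of M: contradiction with geometry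
    have hMz : M.mulVec z.1 = s • z.1 := by
      have h5 : (G z : Fin n → ℝ) = φ z.1 := LinearMap.restrict_coe_apply _ _ _
      rw [← hφ_apply]
      calc φ z.1 = (G z : Fin n → ℝ) := h5.symm
      _ = ((s • z : W) : Fin n → ℝ) := by rw [hzy]
      _ = s • (z.1 : Fin n → ℝ) := rfl
    obtain ⟨t, ht⟩ := hgeo z.1 hMz
    have hgz : g z.1 = 0 := z.2
    rw [ht, _root_.map_smul] at hgz
    simp only [smul_eq_mul] at hgz
    have ht0 : t = 0 := by
      rcases mul_eq_zero.mp hgz with h | h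
      · exact h
      · exact absurd h hgv.ne'
    apply hzne
    apply Subtype.ext
    rw [ht, ht0, zero_smul]
    rfl
  -- conclude
  have hGne : G.charpoly ≠ 0 := (LinearMap.charpoly_monic G).ne_zero
  rw [hchar, hFchar, Polynomial.rootMultiplicity_mul
    (mul_ne_zero (Polynomial.X_sub_C_ne_zero s) hGne),
    Polynomial.rootMultiplicity_X_sub_C_self,
    Polynomial.rootMultiplicity_eq_zero hGroot]

lemma metzler_transpose {n : ℕ} {M : Matrix (Fin n) (Fin n) ℝ} (h : Metzler M) :
    Metzler Mᵀ := fun i j hij => h j i (Ne.symm hij)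

lemma irred_transpose {n : ℕ} {M : Matrix (Fin n) (Fin n) ℝ} (h : Irred M) :
    Irred Mᵀ := by
  intro S hS1 hS2
  have hSc1 : (Sᶜ : Finset (Fin n)).Nonempty := by
    rw [Finset.nonempty_iff_ne_empty]
    intro hc
    apply hS2
    rwa [Finset.compl_eq_empty_iff] at hc
  have hSc2 : (Sᶜ : Finset (Fin n)) ≠ Finset.univ := by
    intro hc
    obtain ⟨i, hi⟩ := hS1
    have : i ∈ (Sᶜ : Finset (Fin n)) := hc ▸ Finset.mem_univ i
    exact (Finset.mem_compl.mp this) hi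
  obtain ⟨i, hi, j, hj, hij⟩ := h Sᶜ hSc1 hSc2
  refine ⟨j, ?_, i, ?_, ?_⟩
  · by_contra hjS
    exact hj (Finset.mem_compl.mpr hjS)
  · exact fun hiS => (Finset.mem_compl.mp hi) hiS
  · simpa [Matrix.transpose_apply] using hij
lemma spectralAbscissa_transpose {n : ℕ} (M : Matrix (Fin n) (Fin n) ℝ) :
    spectralAbscissa Mᵀ = spectralAbscissa M := by
  have hmap : (Mᵀ).map Complex.ofReal = (M.map Complex.ofReal)ᵀ := rfl
  have hspec : spectrum ℂ (M.map Complex.ofReal)ᵀ = spectrum ℂ (M.map Complex.ofReal) := by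
    ext μ
    rw [spectrum.mem_iff, spectrum.mem_iff]
    have h1 : algebraMap ℂ (Matrix (Fin n) (Fin n) ℂ) μ - (M.map Complex.ofReal)ᵀ =
        (algebraMap ℂ (Matrix (Fin n) (Fin n) ℂ) μ - M.map Complex.ofReal)ᵀ := by
      rw [Matrix.transpose_sub]
      congr 1
      rw [Matrix.algebraMap_eq_diagonal, Matrix.diagonal_transpose]
    rw [h1, Matrix.isUnit_iff_isUnit_det, Matrix.det_transpose,
      ← Matrix.isUnit_iff_isUnit_det]
  unfold spectralAbscissa
  rw [hmap, hspec]
lemma charpoly_transpose {n : ℕ} (M : Matrix (Fin n) (Fin n) ℝ) :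
    Mᵀ.charpoly = M.charpoly := by
  unfold Matrix.charpoly
  rw [← Matrix.det_transpose]
  congr 1
  ext i j
  rw [Matrix.transpose_apply, Matrix.charmatrix_apply, Matrix.charmatrix_apply]
  by_cases h : i = j <;>
    simp [h, Matrix.diagonal_apply, Matrix.transpose_apply, Matrix.map_apply, Matrix.one_apply,
      Ne.symm]

end PerronFrobeniusAux

open PerronFrobeniusAux in
/-- For an irreducible Metzler matrix, the spectral abscissa is a simple eigenvalue with a
strictly positive eigenvector. -/
theorem metzler_perron {n : ℕ} (hn : 0 < n) (M : Matrix (Fin n) (Fin n) ℝ)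
    (hMetz : Metzler M) (hirr : Irred M) :
    Polynomial.rootMultiplicity (spectralAbscissa M) M.charpoly = 1 ∧
    ∃ v : Fin n → ℝ, (∀ i, 0 < v i) ∧ M.mulVec v = spectralAbscissa M • v := by
  obtain ⟨v, hvpos, hveig, hgeo⟩ := perron_core hn M hMetz hirr
  obtain ⟨w, hwpos, hweig, -⟩ :=
    perron_core hn Mᵀ (metzler_transpose hMetz) (irred_transpose hirr)
  rw [spectralAbscissa_transpose] at hweig
  exact ⟨simple_root hn M _ v w hvpos hwpos hveig hweig hgeo, v, hvpos, hveig⟩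
end

section
/- Consider the map T : ℝ₊^{n+1} → ℝ₊^{n+1} given componentwise by Tᵢ(y) = (D_w⁻¹B_w y)ᵢ / (1 + (D_w⁻¹B_w y)ᵢ) for i ∈ [n] and T_{n+1}(y) = ((D_w⁻¹B_w y)_{n+1}(1 + y_{n+1})) / (1 + (D_w⁻¹B_w y)_{n+1}). A fixed point y of T satisfies (B_w − D_w − X(y) B_w) y = 0, i.e., is an equilibrium of the single-virus SIWS system, and conversely. -/
open Matrix

/-- Index type for the SIWS model: n population nodes plus the shared resource. -/
abbrev Idx (n : ℕ) := Fin n ⊕ Unit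

/-- X(y) = diag(y₁,…,yₙ,0): the diagonal matrix of the population coordinates of y,
with the resource coordinate set to zero. -/
noncomputable def Xmat {n : ℕ} (y : Idx n → ℝ) : Matrix (Idx n) (Idx n) ℝ :=
  Matrix.diagonal (Sum.elim (fun i => y (Sum.inl i)) fun _ => 0)

/-- The SIWS spread matrix B_w = [[B, b],[δ_w c, 0]]. -/
def mkBw {n : ℕ} (B : Matrix (Fin n) (Fin n) ℝ) (b c : Fin n → ℝ) (dw : ℝ) :
    Matrix (Idx n) (Idx n) ℝ :=
  Matrix.of fun i j =>
    match i, j with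
    | Sum.inl i, Sum.inl j => B i j
    | Sum.inl i, Sum.inr _ => b i
    | Sum.inr _, Sum.inl j => dw * c j
    | Sum.inr _, Sum.inr _ => 0

/-- The SIWS healing-rate matrix D_w = diag(δ₁,…,δₙ,δ_w). -/
noncomputable def mkDw {n : ℕ} (d : Fin n → ℝ) (dw : ℝ) : Matrix (Idx n) (Idx n) ℝ :=
  Matrix.diagonal (Sum.elim d fun _ => dw)

/-- Membership in the sensible domain D: every infection fraction in [0,1] and the
resource contamination nonnegative. -/
def memD {n m : ℕ} (y : Fin m → Idx n → ℝ) : Prop :=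
  ∀ k, (∀ i : Fin n, y k (Sum.inl i) ∈ Set.Icc (0:ℝ) 1) ∧ 0 ≤ y k (Sum.inr ())

/-- Fixed points of the map T (written componentwise, with g = D_w⁻¹B_w y) coincide
with equilibria of the single-virus SIWS system. -/
theorem siws_fixed_point_iff_equilibrium {n : ℕ}
    (Bw : Matrix (Idx n) (Idx n) ℝ) (hBw : ∀ i j, 0 ≤ Bw i j)
    (dv : Idx n → ℝ) (hdv : ∀ i, 0 < dv i)
    (y : Idx n → ℝ) (hy : ∀ i, 0 ≤ y i)
    (g : Idx n → ℝ) (hg : g = ((Matrix.diagonal dv)⁻¹ * Bw).mulVec y) :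
    ((∀ i : Fin n, g (Sum.inl i) / (1 + g (Sum.inl i)) = y (Sum.inl i)) ∧
      g (Sum.inr ()) * (1 + y (Sum.inr ())) / (1 + g (Sum.inr ())) = y (Sum.inr ())) ↔
    (Bw - Matrix.diagonal dv - Xmat y * Bw).mulVec y = 0 := by
  have hginv : ∀ i, g i = (dv i)⁻¹ * Bw.mulVec y i := by
    intro i
    have hinv : (Matrix.diagonal dv)⁻¹ = Matrix.diagonal (fun i => (dv i)⁻¹) := by
      apply Matrix.inv_eq_right_inv
      rw [Matrix.diagonal_mul_diagonal]
      convert Matrix.diagonal_one using 2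
      exact funext fun i => mul_inv_cancel₀ (hdv i).ne'
    rw [hg, ← Matrix.mulVec_mulVec, hinv, Matrix.mulVec_diagonal]
  have hgnn : ∀ i, 0 ≤ g i := by
    intro i
    rw [hginv]
    refine mul_nonneg (inv_nonneg.2 (hdv i).le) ?_
    simp only [Matrix.mulVec, dotProduct]
    exact Finset.sum_nonneg fun j _ => mul_nonneg (hBw i j) (hy j)
  have hBy : ∀ i, Bw.mulVec y i = dv i * g i := by
    intro i; rw [hginv, ← mul_assoc, mul_inv_cancel₀ (hdv i).ne', one_mul]
  have hcomp : ∀ i, (Bw - Matrix.diagonal dv - Xmat y * Bw).mulVec y i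
      = dv i * g i - dv i * y i -
        (Sum.elim (fun j => y (Sum.inl j)) (fun _ => (0:ℝ)) i) * (dv i * g i) := by
    intro i
    simp only [Matrix.sub_mulVec, Xmat, Pi.sub_apply, ← Matrix.mulVec_mulVec,
      Matrix.mulVec_diagonal, hBy]
  constructor
  · rintro ⟨h1, h2⟩
    funext i
    rw [Pi.zero_apply, hcomp i]
    cases i with
    | inl i =>
      have hp : (0:ℝ) < 1 + g (Sum.inl i) := by have := hgnn (Sum.inl i); linarith
      have := (div_eq_iff hp.ne').1 (h1 i)
      simp only [Sum.elim_inl]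
      linear_combination dv (Sum.inl i) * this
    | inr u =>
      have hp : (0:ℝ) < 1 + g (Sum.inr ()) := by have := hgnn (Sum.inr ()); linarith
      have := (div_eq_iff hp.ne').1 h2
      simp only [Sum.elim_inr]
      linear_combination dv (Sum.inr ()) * this
  · intro h
    have hc : ∀ i, (Bw - Matrix.diagonal dv - Xmat y * Bw).mulVec y i = 0 := by
      intro i; rw [h]; rfl
    constructor
    · intro i
      have hi := hc (Sum.inl i)
      rw [hcomp (Sum.inl i)] at hi
      simp only [Sum.elim_inl] at hi
      have hd := (hdv (Sum.inl i)).ne'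
      have hp : (0:ℝ) < 1 + g (Sum.inl i) := by have := hgnn (Sum.inl i); linarith
      rw [div_eq_iff hp.ne']
      have : dv (Sum.inl i) * (g (Sum.inl i) - y (Sum.inl i) * (1 + g (Sum.inl i))) = 0 := by
        linear_combination hi
      rcases mul_eq_zero.1 this with h' | h'
      · exact absurd h' hd
      · linarith
    · have hi := hc (Sum.inr ())
      rw [hcomp (Sum.inr ())] at hi
      simp only [Sum.elim_inr] at hi
      have hd := (hdv (Sum.inr ())).ne'
      have hp : (0:ℝ) < 1 + g (Sum.inr ()) := by have := hgnn (Sum.inr ()); linarith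
      have hgy : g (Sum.inr ()) = y (Sum.inr ()) := by
        have : dv (Sum.inr ()) * (g (Sum.inr ()) - y (Sum.inr ())) = 0 := by
          linear_combination hi
        rcases mul_eq_zero.1 this with h' | h'
        · exact absurd h' hd
        · linarith
      rw [div_eq_iff hp.ne']
      linear_combination hgy
end

section
/- If B_w is an irreducible nonnegative matrix, D_w a positive diagonal matrix, and s(B_w − D_w) > 0, then the single-virus SIWS system has at most one equilibrium ỹ with 0 ≪ ỹ ≪ 1: any two such equilibria coincide. -/
open Matrix

lemma siws_scalar {n} (Bw : Matrix (Idx n) (Idx n) ℝ) (dv y : Idx n → ℝ)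
    (heq : (-(Matrix.diagonal dv) + (1 - Xmat y) * Bw).mulVec y = 0) (i : Idx n) :
    dv i * y i = (1 - Sum.elim (fun k => y (Sum.inl k)) (fun _ => 0) i) * (Bw.mulVec y i) := by
  have h := congrFun heq i
  rw [Matrix.add_mulVec, Matrix.neg_mulVec, ← Matrix.mulVec_mulVec] at h
  simp only [Xmat, ← Matrix.diagonal_one (n := Idx n) (α := ℝ), Matrix.diagonal_sub,
    Matrix.mulVec_diagonal, Pi.add_apply, Pi.neg_apply, Pi.zero_apply, Pi.sub_apply] at h
  linarith

lemma siws_le {n : ℕ}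
    (Bw : Matrix (Idx n) (Idx n) ℝ) (hBw : ∀ i j, 0 ≤ Bw i j)
    (dv : Idx n → ℝ) (hdv : ∀ i, 0 < dv i)
    (hcsum : ∑ i : Fin n, ((Matrix.diagonal dv)⁻¹ * Bw) (Sum.inr ()) (Sum.inl i) = 1)
    (y y' : Idx n → ℝ)
    (hy : ∀ i, 0 < y i ∧ y i < 1) (hy' : ∀ i, 0 < y' i ∧ y' i < 1)
    (heq : (-(Matrix.diagonal dv) + (1 - Xmat y) * Bw).mulVec y = 0)
    (heq' : (-(Matrix.diagonal dv) + (1 - Xmat y') * Bw).mulVec y' = 0)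
    (i : Idx n) : y i ≤ y' i := by
  by_contra hcon
  push_neg at hcon
  obtain ⟨m, -, hm⟩ := Finset.exists_max_image (Finset.univ : Finset (Idx n))
    (fun j => y j / y' j) ⟨i, Finset.mem_univ i⟩
  simp only [Finset.mem_univ, forall_true_left] at hm
  set κ := y m / y' m with hκdef
  have hκ1 : 1 < κ := lt_of_lt_of_le ((one_lt_div (hy' i).1).mpr hcon) (hm i)
  have hκ0 : 0 < κ := by linarith
  have hle : ∀ j, y j ≤ κ * y' j := fun j =>
    (div_le_iff₀ (hy' j).1).mp (hm j)
  have hem : y m = κ * y' m := by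
    rw [hκdef, div_mul_eq_mul_div, mul_div_assoc, div_self (ne_of_gt (hy' m).1), mul_one]
  clear_value κ
  have hmv : ∀ p, Bw.mulVec y p ≤ κ * Bw.mulVec y' p := by
    intro p
    simp only [Matrix.mulVec, dotProduct, Finset.mul_sum]
    refine Finset.sum_le_sum fun j _ => ?_
    calc Bw p j * y j ≤ Bw p j * (κ * y' j) := mul_le_mul_of_nonneg_left (hle j) (hBw p j)
    _ = κ * (Bw p j * y' j) := by ring
  -- positivity of Bw *ᵥ y'
  have hbv' : ∀ p, 0 < Bw.mulVec y' p := by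
    intro p
    have E := siws_scalar Bw dv y' heq' p
    have h1 : 0 < dv p * y' p := mul_pos (hdv p) (hy' p).1
    have h2 : Sum.elim (fun k => y' (Sum.inl k)) (fun _ => (0:ℝ)) p ≤ y' p ∨ True := Or.inr trivial
    rcases p with k | u
    · simp only [Sum.elim_inl] at E
      nlinarith [(hy' (Sum.inl k)).2]
    · simp only [Sum.elim_inr] at E
      nlinarith
  -- contradiction at an inl index where the max ratio is attained
  have inl_case : ∀ k : Fin n, y (Sum.inl k) = κ * y' (Sum.inl k) → False := by
    intro k hk
    set p := (Sum.inl k : Idx n) with hp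
    have E1 := siws_scalar Bw dv y heq p
    have E2 := siws_scalar Bw dv y' heq' p
    simp only [hp, Sum.elim_inl] at E1 E2
    have hyp1 : y p < 1 := (hy p).2
    have hy'p : y' p < y p := by nlinarith [(hy' p).1]
    have s1 : (1 - y p) * (Bw.mulVec y p) ≤ (1 - y p) * (κ * Bw.mulVec y' p) :=
      mul_le_mul_of_nonneg_left (hmv p) (by linarith)
    have s2 : (1 - y p) * (κ * Bw.mulVec y' p) < (1 - y' p) * (κ * Bw.mulVec y' p) :=
      mul_lt_mul_of_pos_right (by linarith) (mul_pos hκ0 (hbv' p))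
    have s5 : κ * ((1 - y' p) * Bw.mulVec y' p) = κ * (dv p * y' p) := by rw [← E2]
    have s4 : κ * (dv p * y' p) = dv p * y p := by rw [hk]; ring
    nlinarith
  rcases m with k | u
  · exact inl_case k hem
  · cases u
    set q := (Sum.inr () : Idx n) with hq
    have E1 := siws_scalar Bw dv y heq q
    have E2 := siws_scalar Bw dv y' heq' q
    simp only [hq, Sum.elim_inr, sub_zero, one_mul] at E1 E2
    -- sum equality forces each term equality
    have hsum0 : ∑ j : Idx n, (Bw q j * (κ * y' j) - Bw q j * y j) = 0 := by
      have h1 : ∑ j : Idx n, Bw q j * y j = Bw.mulVec y q := rfl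
      have h2 : ∑ j : Idx n, Bw q j * (κ * y' j) = κ * Bw.mulVec y' q := by
        rw [Matrix.mulVec, dotProduct, Finset.mul_sum]
        exact Finset.sum_congr rfl fun j _ => by ring
      rw [Finset.sum_sub_distrib, h1, h2]
      have : κ * Bw.mulVec y' q = Bw.mulVec y q := by
        rw [← E1, ← E2, hem]; ring
      rw [this]; ring
    have hterm : ∀ j : Idx n, Bw q j * (κ * y' j) - Bw q j * y j = 0 := by
      intro j
      have := (Finset.sum_eq_zero_iff_of_nonneg (fun j _ => by
        have := hle j
        have := hBw q j
        nlinarith)).mp hsum0 j (Finset.mem_univ j)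
      exact this
    -- from hcsum, some Bw q (inl k) ≠ 0
    have hrow : ∑ i : Fin n, Bw q (Sum.inl i) = dv q := by
      have hdinv : (Matrix.diagonal dv)⁻¹ = Matrix.diagonal (fun j => (dv j)⁻¹) := by
        apply Matrix.inv_eq_right_inv
        rw [Matrix.diagonal_mul_diagonal,
          show (fun i => dv i * (dv i)⁻¹) = fun _ : Idx n => (1:ℝ) from
            funext fun j => mul_inv_cancel₀ (ne_of_gt (hdv j)), Matrix.diagonal_one]
      have : ∀ i : Fin n, ((Matrix.diagonal dv)⁻¹ * Bw) (Sum.inr ()) (Sum.inl i)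
          = (dv q)⁻¹ * Bw q (Sum.inl i) := by
        intro i
        rw [hdinv, Matrix.diagonal_mul]
      rw [Finset.sum_congr rfl (fun i _ => this i), ← Finset.mul_sum] at hcsum
      field_simp [ne_of_gt (hdv q)] at hcsum
      linarith [hcsum]
    have hex : ∃ k : Fin n, Bw q (Sum.inl k) ≠ 0 := by
      by_contra hall
      push_neg at hall
      rw [Finset.sum_congr rfl (fun i _ => hall i)] at hrow
      rw [Finset.sum_const_zero] at hrow
      exact absurd hrow.symm (ne_of_gt (hdv q))
    obtain ⟨k, hk⟩ := hex
    have := hterm (Sum.inl k)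
    have hkk : y (Sum.inl k) = κ * y' (Sum.inl k) := by
      rcases mul_eq_zero.mp (by linarith : Bw q (Sum.inl k) * (κ * y' (Sum.inl k) - y (Sum.inl k)) = 0) with h | h
      · exact absurd h hk
      · linarith
    exact inl_case k hkk

/-- Uniqueness of the strictly interior endemic equilibrium of the single-virus SIWS
system. The last row of D_w⁻¹B_w is the contamination vector c, with cᵢ ≥ 0 summing
to 1 and vanishing last entry. -/
theorem siws_endemic_unique {n : ℕ}
    (Bw : Matrix (Idx n) (Idx n) ℝ) (hBw : ∀ i j, 0 ≤ Bw i j) (hirr : Irred Bw)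
    (dv : Idx n → ℝ) (hdv : ∀ i, 0 < dv i)
    (hs : 0 < spectralAbscissa (Bw - Matrix.diagonal dv))
    (hlast : Bw (Sum.inr ()) (Sum.inr ()) = 0)
    (hcsum : ∑ i : Fin n, ((Matrix.diagonal dv)⁻¹ * Bw) (Sum.inr ()) (Sum.inl i) = 1)
    (y y' : Idx n → ℝ)
    (hy : ∀ i, 0 < y i ∧ y i < 1) (hy' : ∀ i, 0 < y' i ∧ y' i < 1)
    (heq : (-(Matrix.diagonal dv) + (1 - Xmat y) * Bw).mulVec y = 0)
    (heq' : (-(Matrix.diagonal dv) + (1 - Xmat y') * Bw).mulVec y' = 0) :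
    y = y' := by
  funext i
  exact le_antisymm (siws_le Bw hBw dv hdv hcsum y y' hy hy' heq heq' i)
    (siws_le Bw hBw dv hdv hcsum y' y hy' hy heq' heq i)
end

section
/- In the bi-virus SIS model (no shared resource) with B¹ = ν B² and D¹ = ν D² for some ν > 0, B¹ irreducible nonnegative, D¹ positive diagonal, and s(B¹ − D¹) > 0, the two single-virus endemic equilibria coincide, p̃¹ = p̃² = p̃, and s(−D¹ + (I − diag(p̃))B¹) = 0 = s(−D² + (I − diag(p̃))B²). Consequently these parameters cannot satisfy the strict coexistence sufficient conditions s(−D¹ + (I − diag(p̃²))B¹) > 0 and s(−D² + (I − diag(p̃¹))B²) > 0. -/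
open Matrix

lemma aux_spec_iff {n : ℕ} (M : Matrix (Fin n) (Fin n) ℂ) (z : ℂ) :
    z ∈ spectrum ℂ M ↔ ∃ v, v ≠ 0 ∧ M.mulVec v = z • v := by
  rw [spectrum.mem_iff, Matrix.isUnit_iff_isUnit_det, isUnit_iff_ne_zero, not_not,
    ← Matrix.exists_mulVec_eq_zero_iff]
  have hA : (algebraMap ℂ (Matrix (Fin n) (Fin n) ℂ)) z = z • 1 :=
    Algebra.algebraMap_eq_smul_one z
  constructor
  · rintro ⟨v, hv, h⟩
    refine ⟨v, hv, ?_⟩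
    rw [hA, Matrix.sub_mulVec, Matrix.smul_mulVec, Matrix.one_mulVec,
      sub_eq_zero] at h
    exact h.symm
  · rintro ⟨v, hv, h⟩
    refine ⟨v, hv, ?_⟩
    rw [hA, Matrix.sub_mulVec, Matrix.smul_mulVec, Matrix.one_mulVec,
      sub_eq_zero, h]

lemma aux_abscissa_empty (A : Matrix (Fin 0) (Fin 0) ℝ) : spectralAbscissa A = 0 := by
  have hsub : Subsingleton (Matrix (Fin 0) (Fin 0) ℂ) :=
    ⟨fun a b => by ext i j; exact i.elim0⟩
  have hspec : spectrum ℂ (A.map Complex.ofReal) = ∅ := by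
    rw [Set.eq_empty_iff_forall_notMem]
    intro z hz
    exact (spectrum.mem_iff.mp hz) (@isUnit_of_subsingleton _ _ hsub _)
  rw [spectralAbscissa, hspec, Set.image_empty, Real.sSup_empty]

lemma aux_abscissa_zero {n : ℕ} (hn : 0 < n) (A : Matrix (Fin n) (Fin n) ℝ)
    (hMet : ∀ i j, i ≠ j → 0 ≤ A i j) (p : Fin n → ℝ) (hp : ∀ i, 0 < p i)
    (hAp : A.mulVec p = 0) : spectralAbscissa A = 0 := by
  set c : ℝ := ∑ i, |A i i| with hc
  have hcA : ∀ i, 0 ≤ A i i + c := by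
    intro i
    have h1 : |A i i| ≤ c := Finset.single_le_sum (f := fun i => |A i i|)
      (fun j _ => abs_nonneg _) (Finset.mem_univ i)
    linarith [neg_abs_le (A i i)]
  have hc0 : 0 ≤ c := Finset.sum_nonneg fun i _ => abs_nonneg _
  set N : Matrix (Fin n) (Fin n) ℝ := A + c • 1 with hN
  have hNnn : ∀ i j, 0 ≤ N i j := by
    intro i j
    simp only [hN, Matrix.add_apply, Matrix.smul_apply, Matrix.one_apply, smul_eq_mul]
    rcases eq_or_ne i j with rfl | hij
    · simpa using hcA i
    · simpa [hij] using hMet i j hij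
  have hNp : N.mulVec p = c • p := by
    rw [hN, Matrix.add_mulVec, hAp, Matrix.smul_mulVec, Matrix.one_mulVec, zero_add]
  have h0 : (0 : ℂ) ∈ spectrum ℂ (A.map Complex.ofReal) := by
    rw [aux_spec_iff]
    refine ⟨fun i => (p i : ℂ), ?_, ?_⟩
    · intro h
      have := congrFun h ⟨0, hn⟩
      simp only [Pi.zero_apply, Complex.ofReal_eq_zero] at this
      exact (hp ⟨0, hn⟩).ne' this
    · have hmv : (A.map Complex.ofReal).mulVec (fun i => (p i : ℂ)) = 0 := by
        funext i
        have hsum : ∑ x, A i x * p x = 0 := by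
          have := congrFun hAp i
          simpa [Matrix.mulVec, dotProduct] using this
        simp only [Matrix.mulVec, dotProduct, Matrix.map_apply, Pi.zero_apply]
        calc (∑ x, (A i x : ℂ) * (p x : ℂ)) = ((∑ x, A i x * p x : ℝ) : ℂ) := by
              push_cast; rfl
          _ = 0 := by rw [hsum, Complex.ofReal_zero]
      rw [zero_smul]
      exact hmv
  have hbound : ∀ z ∈ spectrum ℂ (A.map Complex.ofReal), z.re ≤ 0 := by
    intro z hz
    rw [aux_spec_iff] at hz
    obtain ⟨v, hv, hMv⟩ := hz
    obtain ⟨i0, -, hi0⟩ := Finset.exists_max_image Finset.univ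
      (fun i => ‖v i‖ / p i) (Finset.univ_nonempty_iff.mpr ⟨⟨0, hn⟩⟩)
    set m : ℝ := ‖v i0‖ / p i0 with hm
    have hmax : ∀ j, ‖v j‖ ≤ m * p j := by
      intro j
      have := hi0 j (Finset.mem_univ j)
      rw [div_le_iff₀ (hp j)] at this
      simpa [hm] using this
    have hvi0 : ‖v i0‖ = m * p i0 := by
      rw [hm, div_mul_cancel₀]
      exact (hp i0).ne'
    have hm0 : 0 < m := by
      obtain ⟨j, hj⟩ := Function.ne_iff.mp hv
      have h1 : 0 < ‖v j‖ := by
        simpa [norm_pos_iff] using hj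
      have h2 : 0 < ‖v j‖ / p j := div_pos h1 (hp j)
      exact lt_of_lt_of_le h2 (hi0 j (Finset.mem_univ j))
    have hkey : ‖z + c‖ ≤ c := by
      have hNv : ∀ i, ∑ j, (N i j : ℂ) * v j = (z + c) * v i := by
        intro i
        have h1 : ∑ j, ((A i j : ℂ)) * v j = z * v i := by
          have := congrFun hMv i
          simpa [Matrix.mulVec, dotProduct, Matrix.map_apply, Pi.smul_apply,
            smul_eq_mul] using this
        have expand : ∀ j, (N i j : ℂ) * v j
            = (A i j : ℂ) * v j + (if i = j then (c : ℂ) else 0) * v j := by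
          intro j
          simp only [hN, Matrix.add_apply, Matrix.smul_apply, Matrix.one_apply,
            smul_eq_mul]
          split_ifs <;> push_cast <;> ring
        calc ∑ j, (N i j : ℂ) * v j
            = ∑ j, ((A i j : ℂ) * v j + (if i = j then (c : ℂ) else 0) * v j) :=
              Finset.sum_congr rfl fun j _ => expand j
          _ = (∑ j, (A i j : ℂ) * v j)
              + ∑ j, (if i = j then (c : ℂ) else 0) * v j := Finset.sum_add_distrib
          _ = z * v i + (c : ℂ) * v i := by
              rw [h1]
              congr 1
              simp [ite_mul, zero_mul]
          _ = (z + c) * v i := by ring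
      have hineq : ‖z + c‖ * (m * p i0) ≤ c * (m * p i0) := by
        have h1 : ‖(z + c) * v i0‖ ≤ ∑ j, N i0 j * ‖v j‖ := by
          rw [← hNv i0]
          refine le_trans (norm_sum_le _ _) ?_
          refine Finset.sum_le_sum fun j _ => ?_
          rw [norm_mul, Complex.norm_real, Real.norm_eq_abs, abs_of_nonneg (hNnn i0 j)]
        have h2 : ∑ j, N i0 j * ‖v j‖ ≤ ∑ j, N i0 j * (m * p j) :=
          Finset.sum_le_sum fun j _ => mul_le_mul_of_nonneg_left (hmax j) (hNnn i0 j)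
        have h3 : ∑ j, N i0 j * (m * p j) = m * (c * p i0) := by
          have := congrFun hNp i0
          simp only [Matrix.mulVec, dotProduct, Pi.smul_apply, smul_eq_mul] at this
          calc ∑ j, N i0 j * (m * p j) = m * ∑ j, N i0 j * p j := by
                rw [Finset.mul_sum]; congr 1; funext j; ring
            _ = m * (c * p i0) := by rw [this]
        have h4 : ‖(z + c) * v i0‖ = ‖z + c‖ * (m * p i0) := by
          rw [norm_mul, hvi0]
        rw [← h4]
        calc ‖(z + c) * v i0‖ ≤ ∑ j, N i0 j * (m * p j) := le_trans h1 h2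
          _ = m * (c * p i0) := h3
          _ = c * (m * p i0) := by ring
      have hpos : 0 < m * p i0 := mul_pos hm0 (hp i0)
      exact le_of_mul_le_mul_right (by linarith [hineq]) hpos
    have : (z + c).re ≤ ‖z + c‖ := Complex.re_le_norm _
    simp only [Complex.add_re, Complex.ofReal_re] at this
    linarith
  have hmem : (0 : ℝ) ∈ (fun z : ℂ => z.re) '' spectrum ℂ (A.map Complex.ofReal) :=
    ⟨0, h0, rfl⟩
  have hbdd : BddAbove ((fun z : ℂ => z.re) '' spectrum ℂ (A.map Complex.ofReal)) := by
    refine ⟨0, ?_⟩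
    rintro x ⟨z, hz, rfl⟩
    exact hbound z hz
  refine le_antisymm ?_ (le_csSup hbdd hmem)
  refine Real.sSup_le ?_ le_rfl
  rintro x ⟨z, hz, rfl⟩
  exact hbound z hz

lemma aux_fp_le {n : ℕ} (M : Fin n → Fin n → ℝ) (hM : ∀ i j, 0 ≤ M i j)
    (p q : Fin n → ℝ) (hp : ∀ i, 0 < p i ∧ p i < 1) (hq : ∀ i, 0 < q i ∧ q i < 1)
    (ep : ∀ i, (1 - p i) * (∑ j, M i j * p j) = p i)
    (eq1 : ∀ i, (1 - q i) * (∑ j, M i j * q j) = q i) : ∀ i, p i ≤ q i := by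
  by_contra h
  push_neg at h
  obtain ⟨k, hk⟩ := h
  have hn : (Finset.univ : Finset (Fin n)).Nonempty := ⟨k, Finset.mem_univ k⟩
  obtain ⟨i0, -, hi0⟩ := Finset.exists_max_image Finset.univ (fun i => p i / q i) hn
  set κ : ℝ := p i0 / q i0 with hκ
  have hκ1 : 1 < κ := by
    have h1 : 1 < p k / q k := (one_lt_div (hq k).1).mpr hk
    exact lt_of_lt_of_le h1 (hi0 k (Finset.mem_univ k))
  have hκ0 : 0 < κ := by linarith
  have hpq : ∀ j, p j ≤ κ * q j := by
    intro j
    have := hi0 j (Finset.mem_univ j)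
    rw [div_le_iff₀ (hq j).1] at this
    linarith [this]
  have hpi0 : p i0 = κ * q i0 := by
    rw [hκ, div_mul_cancel₀]
    exact (hq i0).1.ne'
  set Sq : ℝ := ∑ j, M i0 j * q j with hSq
  have hSqe : (1 - q i0) * Sq = q i0 := eq1 i0
  have hSqpos : 0 < Sq := by
    nlinarith [(hq i0).1, (hq i0).2]
  set Sp : ℝ := ∑ j, M i0 j * p j with hSp
  have hSple : Sp ≤ κ * Sq := by
    rw [hSp, hSq, Finset.mul_sum]
    refine Finset.sum_le_sum fun j _ => ?_
    calc M i0 j * p j ≤ M i0 j * (κ * q j) :=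
          mul_le_mul_of_nonneg_left (hpq j) (hM i0 j)
      _ = κ * (M i0 j * q j) := by ring
  have hq_lt_p : q i0 < p i0 := by nlinarith [(hq i0).1]
  have h5 : p i0 ≤ (1 - p i0) * (κ * Sq) := by
    calc p i0 = (1 - p i0) * Sp := (ep i0).symm
      _ ≤ (1 - p i0) * (κ * Sq) :=
          mul_le_mul_of_nonneg_left hSple (by linarith [(hp i0).2])
  have h6 : (1 - p i0) * (κ * Sq) < (1 - q i0) * (κ * Sq) := by
    refine mul_lt_mul_of_pos_right ?_ (mul_pos hκ0 hSqpos)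
    linarith
  have h7 : (1 - q i0) * (κ * Sq) = p i0 := by
    calc (1 - q i0) * (κ * Sq) = κ * ((1 - q i0) * Sq) := by ring
      _ = κ * q i0 := by rw [hSqe]
      _ = p i0 := hpi0.symm
  linarith

lemma aux_extract {n : ℕ} (B : Matrix (Fin n) (Fin n) ℝ) (d p : Fin n → ℝ)
    (hd : ∀ i, d i ≠ 0)
    (h : ((1 - Matrix.diagonal p) * ((Matrix.diagonal d)⁻¹ * B)).mulVec p = p) :
    ∀ i, (1 - p i) * ((d i)⁻¹ * ∑ j, B i j * p j) = p i := by
  have hinv : (Matrix.diagonal d)⁻¹ = Matrix.diagonal (fun i => (d i)⁻¹) := by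
    apply Matrix.inv_eq_right_inv
    rw [Matrix.diagonal_mul_diagonal]
    ext i j
    rcases eq_or_ne i j with rfl | hij
    · simp [mul_inv_cancel₀ (hd i)]
    · simp [Matrix.diagonal_apply_ne _ hij, Matrix.one_apply_ne hij]
  intro i
  have h2 := congrFun h i
  rw [hinv] at h2
  simp only [← Matrix.mulVec_mulVec, Matrix.sub_mulVec, Matrix.one_mulVec,
    Matrix.mulVec_diagonal, Pi.sub_apply] at h2
  simp only [Matrix.mulVec, dotProduct] at h2 ⊢
  linear_combination h2

/-- In the bi-virus SIS model with proportional parameters B¹ = νB², D¹ = νD², the two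
single-virus endemic equilibria coincide and the invasion spectral abscissae vanish, so
the strict coexistence conditions cannot hold. -/
theorem sis_proportional_no_strict_coexistence {n : ℕ}
    (B1 B2 : Matrix (Fin n) (Fin n) ℝ) (d1 d2 : Fin n → ℝ) (ν : ℝ) (hν : 0 < ν)
    (hB : B1 = ν • B2) (hD : d1 = ν • d2)
    (hB1 : ∀ i j, 0 ≤ B1 i j) (hirr : Irred B1) (hd1 : ∀ i, 0 < d1 i)
    (hs1 : 0 < spectralAbscissa (B1 - Matrix.diagonal d1))
    (hs2 : 0 < spectralAbscissa (B2 - Matrix.diagonal d2))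
    (p1 p2 : Fin n → ℝ)
    (hp1 : ∀ i, 0 < p1 i ∧ p1 i < 1) (hp2 : ∀ i, 0 < p2 i ∧ p2 i < 1)
    (heq1 : ((1 - Matrix.diagonal p1) * ((Matrix.diagonal d1)⁻¹ * B1)).mulVec p1 = p1)
    (heq2 : ((1 - Matrix.diagonal p2) * ((Matrix.diagonal d2)⁻¹ * B2)).mulVec p2 = p2) :
    p1 = p2 ∧
    spectralAbscissa (-(Matrix.diagonal d1) + (1 - Matrix.diagonal p2) * B1) = 0 ∧
    spectralAbscissa (-(Matrix.diagonal d2) + (1 - Matrix.diagonal p1) * B2) = 0 ∧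
    ¬(0 < spectralAbscissa (-(Matrix.diagonal d1) + (1 - Matrix.diagonal p2) * B1) ∧
      0 < spectralAbscissa (-(Matrix.diagonal d2) + (1 - Matrix.diagonal p1) * B2)) := by
  rcases Nat.eq_zero_or_pos n with hn | hn
  · subst hn
    refine ⟨funext fun i => i.elim0, aux_abscissa_empty _, aux_abscissa_empty _, ?_⟩
    rintro ⟨h, -⟩
    rw [aux_abscissa_empty] at h
    exact lt_irrefl 0 h
  have hν' : ν ≠ 0 := hν.ne'
  have hd1' : ∀ i, d1 i ≠ 0 := fun i => (hd1 i).ne'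
  have hDi : ∀ i, d1 i = ν * d2 i := fun i => by rw [hD]; simp
  have hBi : ∀ i j, B1 i j = ν * B2 i j := fun i j => by rw [hB]; simp
  have hd2 : ∀ i, 0 < d2 i := by
    intro i
    have h := hd1 i
    rw [hDi i] at h
    nlinarith
  have hd2' : ∀ i, d2 i ≠ 0 := fun i => (hd2 i).ne'
  have hB2 : ∀ i j, 0 ≤ B2 i j := by
    intro i j
    have h := hB1 i j
    rw [hBi i j] at h
    nlinarith
  have e1 := aux_extract B1 d1 p1 hd1' heq1
  have e2 := aux_extract B2 d2 p2 hd2' heq2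
  have e2' : ∀ i, (1 - p2 i) * ((d1 i)⁻¹ * ∑ j, B1 i j * p2 j) = p2 i := by
    intro i
    have hsum : ∑ j, B1 i j * p2 j = ν * ∑ j, B2 i j * p2 j := by
      rw [Finset.mul_sum]
      exact Finset.sum_congr rfl fun j _ => by rw [hBi i j]; ring
    rw [hsum, hDi i, mul_inv]
    have hνν : ν⁻¹ * ν = 1 := inv_mul_cancel₀ hν'
    calc (1 - p2 i) * ((ν⁻¹ * (d2 i)⁻¹) * (ν * (∑ j, B2 i j * p2 j)))
        = (1 - p2 i) * ((d2 i)⁻¹ * (∑ j, B2 i j * p2 j)) * (ν⁻¹ * ν) := by ring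
      _ = (1 - p2 i) * ((d2 i)⁻¹ * (∑ j, B2 i j * p2 j)) := by rw [hνν, mul_one]
      _ = p2 i := e2 i
  set Mf : Fin n → Fin n → ℝ := fun i j => (d1 i)⁻¹ * B1 i j with hMf
  have hMfnn : ∀ i j, 0 ≤ Mf i j := fun i j =>
    mul_nonneg (inv_nonneg.mpr (hd1 i).le) (hB1 i j)
  have hMsum : ∀ (v : Fin n → ℝ) i,
      ∑ j, Mf i j * v j = (d1 i)⁻¹ * ∑ j, B1 i j * v j := by
    intro v i
    rw [Finset.mul_sum]
    exact Finset.sum_congr rfl fun j _ => by rw [hMf]; ring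
  have ef1 : ∀ i, (1 - p1 i) * (∑ j, Mf i j * p1 j) = p1 i := by
    intro i; rw [hMsum]; exact e1 i
  have ef2 : ∀ i, (1 - p2 i) * (∑ j, Mf i j * p2 j) = p2 i := by
    intro i; rw [hMsum]; exact e2' i
  have hp12 : p1 = p2 := funext fun i =>
    le_antisymm (aux_fp_le Mf hMfnn p1 p2 hp1 hp2 ef1 ef2 i)
      (aux_fp_le Mf hMfnn p2 p1 hp2 hp1 ef2 ef1 i)
  subst hp12
  have key1 : ∀ i, (1 - p1 i) * (∑ j, B1 i j * p1 j) = d1 i * p1 i := by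
    intro i
    have h := e1 i
    have hdd : (d1 i)⁻¹ * d1 i = 1 := inv_mul_cancel₀ (hd1' i)
    calc (1 - p1 i) * (∑ j, B1 i j * p1 j)
        = (1 - p1 i) * ((d1 i)⁻¹ * ∑ j, B1 i j * p1 j) * d1 i
          + (1 - p1 i) * (∑ j, B1 i j * p1 j) * (1 - (d1 i)⁻¹ * d1 i) := by ring
      _ = p1 i * d1 i + (1 - p1 i) * (∑ j, B1 i j * p1 j) * 0 := by rw [h, hdd]; ring_nf
      _ = d1 i * p1 i := by ring
  have key2 : ∀ i, (1 - p1 i) * (∑ j, B2 i j * p1 j) = d2 i * p1 i := by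
    intro i
    have h := key1 i
    have hsum : ∑ j, B1 i j * p1 j = ν * ∑ j, B2 i j * p1 j := by
      rw [Finset.mul_sum]
      exact Finset.sum_congr rfl fun j _ => by rw [hBi i j]; ring
    rw [hsum, hDi i] at h
    apply mul_left_cancel₀ hν'
    linear_combination h
  -- the two invasion matrices
  have hOffMul : ∀ (v : Fin n → ℝ) (B : Matrix (Fin n) (Fin n) ℝ) i j,
      ((1 - Matrix.diagonal v) * B) i j = (1 - v i) * B i j := by
    intro v B i j
    rw [Matrix.sub_mul, Matrix.sub_apply, Matrix.one_mul, Matrix.diagonal_mul]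
    ring
  have met : ∀ (v d : Fin n → ℝ) (B : Matrix (Fin n) (Fin n) ℝ),
      (∀ i, v i < 1) → (∀ i j, 0 ≤ B i j) → ∀ i j, i ≠ j →
      0 ≤ (-(Matrix.diagonal d) + (1 - Matrix.diagonal v) * B) i j := by
    intro v d B hv hB i j hij
    rw [Matrix.add_apply, Matrix.neg_apply, Matrix.diagonal_apply_ne _ hij, hOffMul]
    have := mul_nonneg (by linarith [hv i] : (0:ℝ) ≤ 1 - v i) (hB i j)
    linarith
  have eig : ∀ (d : Fin n → ℝ) (B : Matrix (Fin n) (Fin n) ℝ),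
      (∀ i, (1 - p1 i) * (∑ j, B i j * p1 j) = d i * p1 i) →
      (-(Matrix.diagonal d) + (1 - Matrix.diagonal p1) * B).mulVec p1 = 0 := by
    intro d B hkey
    funext i
    simp only [Matrix.add_mulVec, Matrix.neg_mulVec, Pi.add_apply, Pi.neg_apply,
      Matrix.mulVec_diagonal, ← Matrix.mulVec_mulVec, Matrix.sub_mulVec,
      Matrix.one_mulVec, Pi.sub_apply, Pi.zero_apply]
    simp only [Matrix.mulVec, dotProduct]
    linear_combination hkey i
  have r1 : spectralAbscissa (-(Matrix.diagonal d1) + (1 - Matrix.diagonal p1) * B1) = 0 :=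
    aux_abscissa_zero hn _ (met p1 d1 B1 (fun i => (hp1 i).2) hB1) p1
      (fun i => (hp1 i).1) (eig d1 B1 key1)
  have r2 : spectralAbscissa (-(Matrix.diagonal d2) + (1 - Matrix.diagonal p1) * B2) = 0 :=
    aux_abscissa_zero hn _ (met p1 d2 B2 (fun i => (hp1 i).2) hB2) p1
      (fun i => (hp1 i).1) (eig d2 B2 key2)
  refine ⟨rfl, r1, r2, ?_⟩
  rintro ⟨h, -⟩
  rw [r1] at h
  exact lt_irrefl 0 h
end

section
/- In the bi-virus SIWS model with B_w¹, B_w² irreducible, s(B_w¹ − D_w¹) > 0, s(B_w² − D_w²) > 0, and (D_w¹)⁻¹B_w¹ > (D_w²)⁻¹B_w² entrywise (with inequality strict in at least one entry), the single-virus endemic equilibria satisfy ỹ¹ > ỹ² (componentwise ≥ with at least one strict inequality). -/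
open Matrix

lemma siws_aux_entry {n : ℕ} (Bw : Matrix (Idx n) (Idx n) ℝ) (dv : Idx n → ℝ)
    (hdv : ∀ i, 0 < dv i) (i j : Idx n) :
    ((Matrix.diagonal dv)⁻¹ * Bw) i j = (dv i)⁻¹ * Bw i j := by
  have h : (Matrix.diagonal dv)⁻¹ = Matrix.diagonal (fun i => (dv i)⁻¹) := by
    apply Matrix.inv_eq_left_inv
    rw [Matrix.diagonal_mul_diagonal,
      show (fun i => (dv i)⁻¹ * dv i) = fun _ => (1:ℝ) from
        funext fun i => by field_simp [(hdv i).ne'], Matrix.diagonal_one]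
  rw [h, Matrix.diagonal_mul]

lemma siws_aux_eq {n : ℕ} (A : Matrix (Idx n) (Idx n) ℝ) (y : Idx n → ℝ)
    (heq : ((1 - Xmat y) * A).mulVec y = y) (i : Idx n) :
    (1 - Sum.elim (fun i => y (Sum.inl i)) (fun _ => 0) i) * ∑ j, A i j * y j = y i := by
  have h1 : (1 : Matrix (Idx n) (Idx n) ℝ) - Xmat y
      = Matrix.diagonal (fun i => 1 - Sum.elim (fun i => y (Sum.inl i)) (fun _ => 0) i) := by
    ext a b
    by_cases hab : a = b <;>
      simp [Xmat, Matrix.diagonal_apply, Matrix.one_apply, hab, Matrix.sub_apply]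
  have h2 := congrFun heq i
  rw [show ((1 - Xmat y) * A).mulVec y = (1 - Xmat y).mulVec (A.mulVec y) from
    (Matrix.mulVec_mulVec y _ A).symm, h1] at h2
  rw [Matrix.mulVec_diagonal] at h2
  simpa [Matrix.mulVec, dotProduct] using h2

/-- If virus 1 dominates virus 2, i.e. (D_w¹)⁻¹B_w¹ > (D_w²)⁻¹B_w² entrywise (strict in
some entry), then the single-virus endemic equilibria satisfy ỹ¹ > ỹ². -/
theorem siws_endemic_dominance {n : ℕ}
    (Bw1 Bw2 : Matrix (Idx n) (Idx n) ℝ)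
    (hBw1 : ∀ i j, 0 ≤ Bw1 i j) (hBw2 : ∀ i j, 0 ≤ Bw2 i j)
    (hirr1 : Irred Bw1) (hirr2 : Irred Bw2)
    (dv1 dv2 : Idx n → ℝ) (hdv1 : ∀ i, 0 < dv1 i) (hdv2 : ∀ i, 0 < dv2 i)
    (hs1 : 0 < spectralAbscissa (Bw1 - Matrix.diagonal dv1))
    (hs2 : 0 < spectralAbscissa (Bw2 - Matrix.diagonal dv2))
    (hord : ∀ i j, ((Matrix.diagonal dv2)⁻¹ * Bw2) i j ≤ ((Matrix.diagonal dv1)⁻¹ * Bw1) i j)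
    (hne : (Matrix.diagonal dv1)⁻¹ * Bw1 ≠ (Matrix.diagonal dv2)⁻¹ * Bw2)
    (hlast1 : Bw1 (Sum.inr ()) (Sum.inr ()) = 0)
    (hlast2 : Bw2 (Sum.inr ()) (Sum.inr ()) = 0)
    (hcsum1 : ∑ i : Fin n, ((Matrix.diagonal dv1)⁻¹ * Bw1) (Sum.inr ()) (Sum.inl i) = 1)
    (hcsum2 : ∑ i : Fin n, ((Matrix.diagonal dv2)⁻¹ * Bw2) (Sum.inr ()) (Sum.inl i) = 1)
    (ty1 ty2 : Idx n → ℝ)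
    (hty1 : ∀ i, 0 < ty1 i ∧ ty1 i < 1) (hty2 : ∀ i, 0 < ty2 i ∧ ty2 i < 1)
    (heq1 : ((1 - Xmat ty1) * ((Matrix.diagonal dv1)⁻¹ * Bw1)).mulVec ty1 = ty1)
    (heq2 : ((1 - Xmat ty2) * ((Matrix.diagonal dv2)⁻¹ * Bw2)).mulVec ty2 = ty2) :
    (∀ i, ty2 i ≤ ty1 i) ∧ ty1 ≠ ty2 := by
  classical
  cases n with
  | zero => norm_num at hcsum1
  | succ n =>
  set A1 := (Matrix.diagonal dv1)⁻¹ * Bw1 with hA1def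
  set A2 := (Matrix.diagonal dv2)⁻¹ * Bw2 with hA2def
  have hA1e : ∀ i j, A1 i j = (dv1 i)⁻¹ * Bw1 i j := fun i j =>
    siws_aux_entry Bw1 dv1 hdv1 i j
  have hA2e : ∀ i j, A2 i j = (dv2 i)⁻¹ * Bw2 i j := fun i j =>
    siws_aux_entry Bw2 dv2 hdv2 i j
  have hA1nn : ∀ i j, 0 ≤ A1 i j := fun i j => by
    rw [hA1e]; exact mul_nonneg (inv_nonneg.mpr (hdv1 i).le) (hBw1 i j)
  have hA2nn : ∀ i j, 0 ≤ A2 i j := fun i j => by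
    rw [hA2e]; exact mul_nonneg (inv_nonneg.mpr (hdv2 i).le) (hBw2 i j)
  have hA1rr : A1 (Sum.inr ()) (Sum.inr ()) = 0 := by rw [hA1e, hlast1, mul_zero]
  have hA2rr : A2 (Sum.inr ()) (Sum.inr ()) = 0 := by rw [hA2e, hlast2, mul_zero]
  have hrow : ∀ i : Fin (n+1),
      A1 (Sum.inr ()) (Sum.inl i) = A2 (Sum.inr ()) (Sum.inl i) := by
    have hsum0 : ∑ i : Fin (n+1),
        (A1 (Sum.inr ()) (Sum.inl i) - A2 (Sum.inr ()) (Sum.inl i)) = 0 := by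
      rw [Finset.sum_sub_distrib, hcsum1, hcsum2, sub_self]
    have hz := (Finset.sum_eq_zero_iff_of_nonneg
      (fun i _ => sub_nonneg.mpr (hord (Sum.inr ()) (Sum.inl i)))).mp hsum0
    intro i
    exact sub_eq_zero.mp (hz i (Finset.mem_univ i))
  have he1 := siws_aux_eq A1 ty1 heq1
  have he2 := siws_aux_eq A2 ty2 heq2
  -- pointwise equations
  have hE1 : ∀ m : Fin (n+1), (1 - ty1 (Sum.inl m)) *
      ∑ j, A1 (Sum.inl m) j * ty1 j = ty1 (Sum.inl m) := fun m => by
    simpa using he1 (Sum.inl m)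
  have hE2 : ∀ m : Fin (n+1), (1 - ty2 (Sum.inl m)) *
      ∑ j, A2 (Sum.inl m) j * ty2 j = ty2 (Sum.inl m) := fun m => by
    simpa using he2 (Sum.inl m)
  have hres1 : ∑ i : Fin (n+1), A1 (Sum.inr ()) (Sum.inl i) * ty1 (Sum.inl i)
      = ty1 (Sum.inr ()) := by
    have h := he1 (Sum.inr ())
    simpa [Fintype.sum_sum_type, hA1rr] using h
  have hres2 : ∑ i : Fin (n+1), A2 (Sum.inr ()) (Sum.inl i) * ty2 (Sum.inl i)
      = ty2 (Sum.inr ()) := by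
    have h := he2 (Sum.inr ())
    simpa [Fintype.sum_sum_type, hA2rr] using h
  -- ty1 ≠ ty2
  have hneq : ty1 ≠ ty2 := by
    intro hyy
    apply hne
    ext i j
    have hc : ∀ i : Idx (n+1),
        0 < 1 - Sum.elim (fun i => ty1 (Sum.inl i)) (fun _ => 0) i := by
      rintro (i | ⟨⟩)
      · simpa using sub_pos.mpr (hty1 (Sum.inl i)).2
      · norm_num
    have hsums : ∑ j, A1 i j * ty1 j = ∑ j, A2 i j * ty1 j := by
      have h1 := he1 i
      have h2 := he2 i
      rw [← hyy] at h2
      exact mul_left_cancel₀ (hc i).ne' (h1.trans h2.symm)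
    have hsum0 : ∑ j, (A1 i j - A2 i j) * ty1 j = 0 := by
      simp_rw [sub_mul]
      rw [Finset.sum_sub_distrib, hsums, sub_self]
    have hz := (Finset.sum_eq_zero_iff_of_nonneg (fun j _ =>
      mul_nonneg (sub_nonneg.mpr (hord i j)) (hty1 j).1.le)).mp hsum0
    have := hz j (Finset.mem_univ j)
    have hj := (hty1 j).1.ne'
    have : A1 i j - A2 i j = 0 := by
      rcases mul_eq_zero.mp this with h | h
      · exact h
      · exact absurd h hj
    linarith [this]
  -- the maximum ratio
  obtain ⟨m, -, hm⟩ := Finset.exists_max_image Finset.univ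
    (fun i : Fin (n+1) => ty2 (Sum.inl i) / ty1 (Sum.inl i)) ⟨0, Finset.mem_univ 0⟩
  set κ := ty2 (Sum.inl m) / ty1 (Sum.inl m) with hκdef
  have hκpos : 0 < κ := div_pos (hty2 (Sum.inl m)).1 (hty1 (Sum.inl m)).1
  have hbp : ∀ i : Fin (n+1), ty2 (Sum.inl i) ≤ κ * ty1 (Sum.inl i) := fun i => by
    have h := hm i (Finset.mem_univ i)
    exact (div_le_iff₀ (hty1 (Sum.inl i)).1).mp h
  have hbr : ty2 (Sum.inr ()) ≤ κ * ty1 (Sum.inr ()) := by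
    calc ty2 (Sum.inr ()) = ∑ i : Fin (n+1), A2 (Sum.inr ()) (Sum.inl i) * ty2 (Sum.inl i) :=
          hres2.symm
      _ ≤ ∑ i : Fin (n+1), A1 (Sum.inr ()) (Sum.inl i) * (κ * ty1 (Sum.inl i)) := by
          refine Finset.sum_le_sum fun i _ => ?_
          rw [← hrow i]
          exact mul_le_mul_of_nonneg_left (hbp i) (hA1nn _ _)
      _ = κ * ∑ i : Fin (n+1), A1 (Sum.inr ()) (Sum.inl i) * ty1 (Sum.inl i) := by
          rw [Finset.mul_sum]; exact Finset.sum_congr rfl fun i _ => by ring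
      _ = κ * ty1 (Sum.inr ()) := by rw [hres1]
  have hbound : ∀ j : Idx (n+1), ty2 j ≤ κ * ty1 j := by
    rintro (i | ⟨⟩)
    · exact hbp i
    · exact hbr
  -- κ ≤ 1
  have hm2 : ty2 (Sum.inl m) = κ * ty1 (Sum.inl m) := by
    rw [hκdef, div_mul_cancel₀ _ (hty1 (Sum.inl m)).1.ne']
  have hS2le : ∑ j, A2 (Sum.inl m) j * ty2 j ≤ κ * ∑ j, A1 (Sum.inl m) j * ty1 j := by
    rw [Finset.mul_sum]
    refine Finset.sum_le_sum fun j _ => ?_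
    calc A2 (Sum.inl m) j * ty2 j ≤ A2 (Sum.inl m) j * (κ * ty1 j) :=
          mul_le_mul_of_nonneg_left (hbound j) (hA2nn _ _)
      _ ≤ A1 (Sum.inl m) j * (κ * ty1 j) :=
          mul_le_mul_of_nonneg_right (hord _ _)
            (mul_nonneg hκpos.le (hty1 j).1.le)
      _ = κ * (A1 (Sum.inl m) j * ty1 j) := by ring
  have hS1pos : 0 < ∑ j, A1 (Sum.inl m) j * ty1 j := by
    have h := hE1 m
    have ht1 := (hty1 (Sum.inl m)).1
    have ht1' := (hty1 (Sum.inl m)).2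
    nlinarith
  have hκle : κ ≤ 1 := by
    have h1 := hE1 m
    have h2 := hE2 m
    have ht2' := (hty2 (Sum.inl m)).2
    have ht1 := (hty1 (Sum.inl m)).1
    have ht1' := (hty1 (Sum.inl m)).2
    have hnn : (0:ℝ) ≤ 1 - ty2 (Sum.inl m) := by linarith
    have h3 := mul_le_mul_of_nonneg_left hS2le hnn
    rw [h2] at h3
    rw [hm2] at h3
    have hring : (1 - κ * ty1 (Sum.inl m)) * (κ * ∑ j, A1 (Sum.inl m) j * ty1 j)
        = κ * ((1 - κ * ty1 (Sum.inl m)) * ∑ j, A1 (Sum.inl m) j * ty1 j) := by ring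
    rw [hring] at h3
    have h4 := le_of_mul_le_mul_left h3 hκpos
    by_contra hκ
    push_neg at hκ
    nlinarith [h4, h1, mul_pos (mul_pos ht1 hS1pos) (sub_pos.mpr hκ), hS1pos, ht1]
  refine ⟨fun i => le_trans (hbound i) ?_, hneq⟩
  nlinarith [mul_nonneg (sub_nonneg.mpr hκle) (hty1 i).1.le]
end

section
/- In the bi-virus SIWS model with B_w¹, B_w² irreducible nonnegative, D_w¹, D_w² positive diagonal, s(B_w¹ − D_w¹) > 0, s(B_w² − D_w²) > 0, and (D_w¹)⁻¹B_w¹ > (D_w²)⁻¹B_w², there exists no coexisting equilibrium: there is no pair (ŷ¹, ŷ²) with ŷ¹ ≫ 0, ŷ² ≫ 0, ŷ¹ + ŷ² ≪ 1 satisfying (I − X(ŷ¹) − X(ŷ²))(D_wᵏ)⁻¹B_wᵏ ŷᵏ = ŷᵏ for k = 1, 2. -/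
open Matrix

lemma diag_inv_mul_apply' {α : Type*} [Fintype α] [DecidableEq α]
    (d : α → ℝ) (hd : ∀ i, d i ≠ 0) (B : Matrix α α ℝ) (i j : α) :
    ((Matrix.diagonal d)⁻¹ * B) i j = (d i)⁻¹ * B i j := by
  have h : (Matrix.diagonal d)⁻¹ = Matrix.diagonal (fun i => (d i)⁻¹) := by
    apply Matrix.inv_eq_right_inv
    rw [Matrix.diagonal_mul_diagonal]
    simp [fun i => mul_inv_cancel₀ (hd i)]
  rw [h, Matrix.diagonal_mul]

/-- If virus 1 strictly dominates virus 2 in the bi-virus SIWS model, then no coexisting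
equilibrium exists. -/
theorem siws_no_coexisting_equilibrium {n : ℕ}
    (Bw1 Bw2 : Matrix (Idx n) (Idx n) ℝ)
    (hBw1 : ∀ i j, 0 ≤ Bw1 i j) (hBw2 : ∀ i j, 0 ≤ Bw2 i j)
    (hirr1 : Irred Bw1) (hirr2 : Irred Bw2)
    (dv1 dv2 : Idx n → ℝ) (hdv1 : ∀ i, 0 < dv1 i) (hdv2 : ∀ i, 0 < dv2 i)
    (hs1 : 0 < spectralAbscissa (Bw1 - Matrix.diagonal dv1))
    (hs2 : 0 < spectralAbscissa (Bw2 - Matrix.diagonal dv2))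
    (hord : ∀ i j, ((Matrix.diagonal dv2)⁻¹ * Bw2) i j ≤ ((Matrix.diagonal dv1)⁻¹ * Bw1) i j)
    (hne : (Matrix.diagonal dv1)⁻¹ * Bw1 ≠ (Matrix.diagonal dv2)⁻¹ * Bw2) :
    ¬∃ y1 y2 : Idx n → ℝ, (∀ i, 0 < y1 i) ∧ (∀ i, 0 < y2 i) ∧ (∀ i, y1 i + y2 i < 1) ∧
      ((1 - Xmat y1 - Xmat y2) * ((Matrix.diagonal dv1)⁻¹ * Bw1)).mulVec y1 = y1 ∧
      ((1 - Xmat y1 - Xmat y2) * ((Matrix.diagonal dv2)⁻¹ * Bw2)).mulVec y2 = y2 := by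
  rintro ⟨y1, y2, hy1, hy2, h12, he1, he2⟩
  classical
  set A1 := (Matrix.diagonal dv1)⁻¹ * Bw1 with hA1
  set A2 := (Matrix.diagonal dv2)⁻¹ * Bw2 with hA2
  have hA1e : ∀ i j, A1 i j = (dv1 i)⁻¹ * Bw1 i j := fun i j =>
    diag_inv_mul_apply' dv1 (fun i => (hdv1 i).ne') Bw1 i j
  have hA2e : ∀ i j, A2 i j = (dv2 i)⁻¹ * Bw2 i j := fun i j =>
    diag_inv_mul_apply' dv2 (fun i => (hdv2 i).ne') Bw2 i j
  have hA1nn : ∀ i j, 0 ≤ A1 i j := fun i j => by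
    rw [hA1e]; exact mul_nonneg (inv_nonneg.2 (hdv1 i).le) (hBw1 i j)
  have hA2nn : ∀ i j, 0 ≤ A2 i j := fun i j => by
    rw [hA2e]; exact mul_nonneg (inv_nonneg.2 (hdv2 i).le) (hBw2 i j)
  set s : (Fin n ⊕ Unit) → ℝ :=
    Sum.elim (fun i => 1 - y1 (Sum.inl i) - y2 (Sum.inl i)) (fun _ => 1) with hs
  have hS : (1 : Matrix (Fin n ⊕ Unit) (Fin n ⊕ Unit) ℝ) - Xmat y1 - Xmat y2
      = Matrix.diagonal s := by
    ext i j
    rcases eq_or_ne i j with rfl | hij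
    · cases i <;>
        simp [Xmat, hs, Matrix.sub_apply, Matrix.diagonal_apply_eq, Matrix.one_apply_eq]
    · simp [Xmat, Matrix.sub_apply, Matrix.diagonal_apply_ne _ hij, Matrix.one_apply_ne hij]
  have hspos : ∀ i, 0 < s i := by
    rintro (i | i)
    · have := h12 (Sum.inl i); simp only [hs, Sum.elim_inl]; linarith
    · simp [hs]
  have heq1 : ∀ i, s i * (∑ j, A1 i j * y1 j) = y1 i := by
    intro i
    have h := congrFun he1 i
    rw [hS, ← Matrix.mulVec_mulVec] at h
    simpa [Matrix.mulVec, dotProduct, Matrix.diagonal_apply, Finset.mul_sum,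
      Finset.sum_ite_eq, mul_comm] using h
  have heq2 : ∀ i, s i * (∑ j, A2 i j * y2 j) = y2 i := by
    intro i
    have h := congrFun he2 i
    rw [hS, ← Matrix.mulVec_mulVec] at h
    simpa [Matrix.mulVec, dotProduct, Matrix.diagonal_apply, Finset.mul_sum,
      Finset.sum_ite_eq, mul_comm] using h
  obtain ⟨i0, -, hi0⟩ := Finset.exists_max_image (Finset.univ : Finset (Fin n ⊕ Unit))
    (fun j => y2 j / y1 j) ⟨Sum.inr (), Finset.mem_univ _⟩
  set c : ℝ := y2 i0 / y1 i0 with hc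
  have hcpos : 0 < c := div_pos (hy2 i0) (hy1 i0)
  have hle : ∀ j, y2 j ≤ c * y1 j := fun j => by
    have := hi0 j (Finset.mem_univ j)
    rw [div_le_iff₀ (hy1 j)] at this
    linarith [this]
  have key : ∀ i, y2 i = c * y1 i →
      ∀ j, A1 i j = A2 i j ∧ (A2 i j ≠ 0 → y2 j = c * y1 j) := by
    intro i hyi
    have hsum : ∑ j, A2 i j * y2 j = ∑ j, c * (A1 i j * y1 j) := by
      have hcalc : s i * (∑ j, A2 i j * y2 j) = s i * (c * ∑ j, A1 i j * y1 j) := by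
        rw [heq2 i, hyi, ← heq1 i]; ring
      have h3 := mul_left_cancel₀ (hspos i).ne' hcalc
      rw [h3, Finset.mul_sum]
    have hterm : ∀ j ∈ Finset.univ, A2 i j * y2 j ≤ c * (A1 i j * y1 j) := by
      intro j _
      have h1 : A2 i j * y2 j ≤ A2 i j * (c * y1 j) :=
        mul_le_mul_of_nonneg_left (hle j) (hA2nn i j)
      have h2 : A2 i j * (c * y1 j) ≤ A1 i j * (c * y1 j) :=
        mul_le_mul_of_nonneg_right (hord i j) (le_of_lt (mul_pos hcpos (hy1 j)))
      nlinarith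
    have hall := (Finset.sum_eq_sum_iff_of_le hterm).1 hsum
    intro j
    have hE : A2 i j * y2 j = c * (A1 i j * y1 j) := hall j (Finset.mem_univ j)
    have h1 : A2 i j * y2 j ≤ A2 i j * (c * y1 j) :=
      mul_le_mul_of_nonneg_left (hle j) (hA2nn i j)
    have h2 : A2 i j * (c * y1 j) ≤ A1 i j * (c * y1 j) :=
      mul_le_mul_of_nonneg_right (hord i j) (le_of_lt (mul_pos hcpos (hy1 j)))
    have hring : c * (A1 i j * y1 j) = A1 i j * (c * y1 j) := by ring
    have e1 : A1 i j * (c * y1 j) = A2 i j * (c * y1 j) := by linarith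
    have hAeq : A1 i j = A2 i j :=
      mul_right_cancel₀ (ne_of_gt (mul_pos hcpos (hy1 j))) e1
    refine ⟨hAeq, fun hA2ne => ?_⟩
    have e2 : A2 i j * y2 j = A2 i j * (c * y1 j) := by linarith
    exact mul_left_cancel₀ hA2ne e2
  set T : Finset (Fin n ⊕ Unit) := Finset.univ.filter (fun j => y2 j = c * y1 j) with hT
  have hi0T : i0 ∈ T := by
    simp only [hT, Finset.mem_filter, Finset.mem_univ, true_and, hc]
    rw [div_mul_cancel₀]
    exact (hy1 i0).ne'
  have hTuniv : T = Finset.univ := by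
    by_contra hne'
    obtain ⟨i, hiT, j, hjT, hBij⟩ := hirr2 T ⟨i0, hi0T⟩ hne'
    have hyi : y2 i = c * y1 i := (Finset.mem_filter.1 hiT).2
    have hA2ij : A2 i j ≠ 0 := by
      rw [hA2e]; exact mul_ne_zero (inv_ne_zero (hdv2 i).ne') hBij
    exact hjT (Finset.mem_filter.2 ⟨Finset.mem_univ j, (key i hyi j).2 hA2ij⟩)
  have hall : ∀ i, y2 i = c * y1 i := fun i =>
    (Finset.mem_filter.1 (show i ∈ T by rw [hTuniv]; exact Finset.mem_univ i)).2
  exact hne (by ext i j; exact (key i (hall i) j).1)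
end
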